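/- arXiv:1202.5573 — 6 statements merged into one kernel-verified Lean document; each statement's English description precedes it below -/
import Mathlib

section
/- Let N be a positive integer and r > 0. If the sequence φ : ℕ → ℝ belongs to the class W(r), then the sequence Φ defined by Φ(n) = φ(N·n) belongs to the class W(r^N). -/
open Filter Topology

/-- The class `W(r)` of weight sequences. -/
def ClassW (r : ℝ) (γ : ℕ → ℝ) : Prop :=
  (∀ n, 0 < γ n) ∧
  Tendsto (fun n => γ (n - 1) / γ n) atTop (𝓝 (1 / r)) ∧
  Summable (fun i => γ i / r ^ i) ∧
  Tendsto
    (fun m => limsup (fun n => (∑ i ∈ Finset.Icc m (n - m), γ (n - i) * γ i) / γ n) atTop)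
    atTop (𝓝 0)

private lemma ratio_pow (r : ℝ) (φ : ℕ → ℝ) (hpos : ∀ n, 0 < φ n)
    (h : Tendsto (fun n => φ (n - 1) / φ n) atTop (𝓝 (1 / r))) (k : ℕ) :
    Tendsto (fun n => φ (n - k) / φ n) atTop (𝓝 (1 / r ^ k)) := by
  induction k with
  | zero =>
      simpa using tendsto_const_nhds.congr
        (fun n => by simp [div_self (hpos n).ne'])
  | succ k ih =>
      have h1 : Tendsto (fun n => φ (n - 1 - k) / φ (n - 1)) atTop (𝓝 (1 / r ^ k)) :=
        ih.comp (tendsto_sub_atTop_nat 1)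
      have h2 := h1.mul h
      have heq : ∀ n : ℕ, (φ (n - 1 - k) / φ (n - 1)) * (φ (n - 1) / φ n)
          = φ (n - (k + 1)) / φ n := by
        intro n
        rw [div_mul_div_comm, mul_comm (φ (n-1-k)) (φ (n-1)),
          mul_div_mul_left _ _ (hpos (n-1)).ne']
        congr 2
        omega
      have hval : (1 / r ^ k) * (1 / r) = 1 / r ^ (k + 1) := by
        rw [pow_succ]; ring
      rw [hval] at h2
      exact h2.congr heq

private lemma group_sum (N : ℕ) (hN : 0 < N) (ψ : ℕ → ℝ) (hψ : ∀ q, 0 ≤ ψ q)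
    (s t : Finset ℕ) (h : ∀ i ∈ s, i / N ∈ t) :
    (∑ i ∈ s, ψ (i / N)) ≤ N * ∑ q ∈ t, ψ q := by
  rw [← Finset.sum_fiberwise_of_maps_to h (fun i => ψ (i / N)), Finset.mul_sum]
  refine Finset.sum_le_sum (fun q hq => ?_)
  have hterm : ∀ i ∈ s.filter (fun i => i / N = q), ψ (i / N) = ψ q := by
    intro i hi
    rw [(Finset.mem_filter.1 hi).2]
  rw [Finset.sum_congr rfl hterm, Finset.sum_const, nsmul_eq_mul]
  have hcard : (s.filter (fun i => i / N = q)).card ≤ N := by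
    have hsub : s.filter (fun i => i / N = q) ⊆ Finset.Ico (N * q) (N * q + N) := by
      intro i hi
      have hiq := (Finset.mem_filter.1 hi).2
      have h1 : N * (i / N) ≤ i := Nat.mul_div_le i N
      have h2 : i % N + N * (i / N) = i := Nat.mod_add_div i N
      have h3 : i % N < N := Nat.mod_lt i hN
      rw [hiq] at h1 h2
      exact Finset.mem_Ico.2 ⟨h1, by omega⟩
    calc (s.filter (fun i => i / N = q)).card ≤ (Finset.Ico (N * q) (N * q + N)).card :=
          Finset.card_le_card hsub
      _ = N := by rw [Nat.card_Ico]; omega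
  have hcard' : ((s.filter (fun i => i / N = q)).card : ℝ) ≤ (N : ℝ) := by exact_mod_cast hcard
  exact mul_le_mul_of_nonneg_right hcard' (hψ q)

private lemma bound_b (N : ℕ) (hN : 0 < N) (φ : ℕ → ℝ) (hpos : ∀ n, 0 < φ n) (m n : ℕ) :
    (∑ i ∈ Finset.Icc m (n - m), φ (N * (n - i)) * φ (N * i)) / φ (N * n)
      ≤ (∑ i ∈ Finset.Icc (N * m) (N * n - N * m), φ (N * n - i) * φ i) / φ (N * n) := by
  have hnum : (∑ i ∈ Finset.Icc m (n - m), φ (N * (n - i)) * φ (N * i))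
      ≤ ∑ i ∈ Finset.Icc (N * m) (N * n - N * m), φ (N * n - i) * φ i := by
    have himg : (∑ i ∈ Finset.Icc m (n - m), φ (N * (n - i)) * φ (N * i))
        = ∑ j ∈ (Finset.Icc m (n - m)).image (fun i => N * i), φ (N * n - j) * φ j := by
      rw [Finset.sum_image (fun a _ b _ hab => Nat.eq_of_mul_eq_mul_left hN hab)]
      refine Finset.sum_congr rfl (fun i hi => ?_)
      rw [Nat.mul_sub]
    rw [himg]
    refine Finset.sum_le_sum_of_subset_of_nonneg ?_
      (fun j _ _ => mul_nonneg (hpos _).le (hpos _).le)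
    intro j hj
    obtain ⟨i, hi, rfl⟩ := Finset.mem_image.1 hj
    obtain ⟨hi1, hi2⟩ := Finset.mem_Icc.1 hi
    refine Finset.mem_Icc.2 ⟨Nat.mul_le_mul_left N hi1, ?_⟩
    have h2 := Nat.mul_le_mul_left N hi2
    rwa [Nat.mul_sub] at h2
  exact div_le_div_of_nonneg_right hnum (hpos _).le

private lemma bound_c (N : ℕ) (hN : 0 < N) (φ : ℕ → ℝ) (hpos : ∀ n, 0 < φ n)
    (E : ℝ) (hE : 0 < E)
    (compN : ∀ j k : ℕ, j ≤ k + N → k ≤ j + N → φ j ≤ E * φ k) (m n' : ℕ) :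
    (∑ i ∈ Finset.Icc (N * m) (n' - N * m), φ (n' - i) * φ i) / φ n'
      ≤ (N * E ^ 3) *
        ((∑ i ∈ Finset.Icc m (n' / N - m), φ (N * (n' / N - i)) * φ (N * i)) / φ (N * (n' / N))) := by
  set n := n' / N with hn
  have hn1 : N * n ≤ n' := by rw [hn]; exact Nat.mul_div_le n' N
  have hn2 : n' < N * n + N := by
    have h2 := Nat.mod_add_div n' N
    have h3 := Nat.mod_lt n' hN
    rw [← hn] at h2
    omega
  have key : ∀ i ∈ Finset.Icc (N * m) (n' - N * m),
      φ (n' - i) * φ i / φ n'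
        ≤ E ^ 3 * (φ (N * (n - i / N)) * φ (N * (i / N)) / φ (N * n)) := by
    intro i hi
    obtain ⟨hi1, hi2⟩ := Finset.mem_Icc.1 hi
    have hiN : i ≤ n' := le_trans hi2 (Nat.sub_le _ _)
    have hq1 : N * (i / N) ≤ i := Nat.mul_div_le i N
    have hq2 : i < N * (i / N) + N := by
      have h2 := Nat.mod_add_div i N
      have h3 := Nat.mod_lt i hN
      omega
    have hsub : N * (n - i / N) = N * n - N * (i / N) := Nat.mul_sub N n (i / N)
    have h1 : φ i ≤ E * φ (N * (i / N)) := compN _ _ (by omega) (by omega)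
    have h2 : φ (n' - i) ≤ E * φ (N * (n - i / N)) := compN _ _ (by omega) (by omega)
    have h3 : φ (N * n) ≤ E * φ n' := compN _ _ (by omega) (by omega)
    rw [mul_div_assoc' (E ^ 3), div_le_div_iff₀ (hpos n') (hpos (N * n))]
    calc φ (n' - i) * φ i * φ (N * n)
        ≤ ((E * φ (N * (n - i / N))) * (E * φ (N * (i / N)))) * (E * φ n') := by
          refine mul_le_mul ?_ h3 (hpos _).le ?_
          · exact mul_le_mul h2 h1 (hpos _).le (mul_nonneg hE.le (hpos _).le)
          · exact mul_nonneg (mul_nonneg hE.le (hpos _).le) (mul_nonneg hE.le (hpos _).le)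
      _ = E ^ 3 * (φ (N * (n - i / N)) * φ (N * (i / N))) * φ n' := by ring
  calc (∑ i ∈ Finset.Icc (N * m) (n' - N * m), φ (n' - i) * φ i) / φ n'
      = ∑ i ∈ Finset.Icc (N * m) (n' - N * m), φ (n' - i) * φ i / φ n' :=
        Finset.sum_div _ _ _
    _ ≤ ∑ i ∈ Finset.Icc (N * m) (n' - N * m),
          E ^ 3 * (φ (N * (n - i / N)) * φ (N * (i / N)) / φ (N * n)) :=
        Finset.sum_le_sum key
    _ ≤ N * ∑ q ∈ Finset.Icc m (n - m),
          E ^ 3 * (φ (N * (n - q)) * φ (N * q) / φ (N * n)) := by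
        refine group_sum N hN (fun q => E ^ 3 * (φ (N * (n - q)) * φ (N * q) / φ (N * n)))
          (fun q => mul_nonneg (pow_nonneg hE.le 3)
            (div_nonneg (mul_nonneg (hpos _).le (hpos _).le) (hpos _).le)) _ _ ?_
        intro i hi
        obtain ⟨hi1, hi2⟩ := Finset.mem_Icc.1 hi
        have hiN : i ≤ n' := le_trans hi2 (Nat.sub_le _ _)
        refine Finset.mem_Icc.2 ⟨(Nat.le_div_iff_mul_le hN).2 (by rw [Nat.mul_comm]; exact hi1), ?_⟩
        have hle : i / N ≤ (n' - N * m) / N := Nat.div_le_div_right hi2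
        have heq2 : (n' - N * m) / N = n' / N - m :=
          Nat.sub_mul_div n' N m
        rw [heq2, ← hn] at hle
        exact hle
    _ = (N * E ^ 3) *
          ((∑ i ∈ Finset.Icc m (n - m), φ (N * (n - i)) * φ (N * i)) / φ (N * n)) := by
        simp only [← mul_div_assoc, ← Finset.sum_div, ← Finset.mul_sum]
        ring

/-- If `φ ∈ W(r)` then `Φ(n) = φ(N n)` is in `W(r^N)`. -/
theorem stmt0 (N : ℕ) (hN : 0 < N) (r : ℝ) (hr : 0 < r) (φ : ℕ → ℝ)
    (hφ : ClassW r φ) : ClassW (r ^ N) (fun n => φ (N * n)) := by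
  obtain ⟨hpos, hratio, hsum, hlim⟩ := hφ
  have hNtend : Tendsto (fun n : ℕ => N * n) atTop atTop :=
    tendsto_atTop_mono (fun n => Nat.le_mul_of_pos_left n hN) tendsto_id
  refine ⟨fun n => hpos _, ?_, ?_, ?_⟩
  · -- ratio
    have h := (ratio_pow r φ hpos hratio N).comp hNtend
    refine h.congr (fun n => ?_)
    simp only [Function.comp]
    congr 2
    rw [Nat.mul_sub, Nat.mul_one]
  · -- summability
    have h1 : Summable ((fun i => φ i / r ^ i) ∘ (fun i => N * i)) :=
      hsum.comp_injective (fun a b hab => Nat.eq_of_mul_eq_mul_left hN hab)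
    refine h1.congr (fun i => ?_)
    simp only [Function.comp, pow_mul]
  · -- limsup condition
    show Tendsto (fun m => limsup
      (fun n => (∑ i ∈ Finset.Icc m (n - m), φ (N * (n - i)) * φ (N * i)) / φ (N * n)) atTop)
      atTop (𝓝 0)
    -- step constant D
    have hu : Tendsto (fun n => φ n / φ (n + 1)) atTop (𝓝 (1 / r)) := by
      have h := hratio.comp (tendsto_add_atTop_nat 1)
      refine h.congr (fun n => ?_)
      simp [Function.comp]
    have hv : Tendsto (fun n => φ (n + 1) / φ n) atTop (𝓝 r) := by
      have h := hu.inv₀ (by positivity)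
      rw [one_div, inv_inv] at h
      exact h.congr (fun n => by rw [inv_div])
    obtain ⟨C₁, hC₁⟩ := hu.bddAbove_range
    obtain ⟨C₂, hC₂⟩ := hv.bddAbove_range
    set D := max 1 (max C₁ C₂) with hD
    have hD1 : (1 : ℝ) ≤ D := le_max_left _ _
    have hstep1 : ∀ n, φ n ≤ D * φ (n + 1) := by
      intro n
      have h1 : φ n / φ (n + 1) ≤ D :=
        le_trans (hC₁ (Set.mem_range_self n)) (le_trans (le_max_left _ _) (le_max_right _ _))
      calc φ n = (φ n / φ (n + 1)) * φ (n + 1) := (div_mul_cancel₀ (φ n) (hpos (n + 1)).ne').symm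
        _ ≤ D * φ (n + 1) := mul_le_mul_of_nonneg_right h1 (hpos _).le
    have hstep2 : ∀ n, φ (n + 1) ≤ D * φ n := by
      intro n
      have h1 : φ (n + 1) / φ n ≤ D :=
        le_trans (hC₂ (Set.mem_range_self n)) (le_trans (le_max_right _ _) (le_max_right _ _))
      calc φ (n + 1) = (φ (n + 1) / φ n) * φ n := (div_mul_cancel₀ (φ (n + 1)) (hpos n).ne').symm
        _ ≤ D * φ n := mul_le_mul_of_nonneg_right h1 (hpos _).le
    have comp : ∀ d j k : ℕ, j ≤ k + d → k ≤ j + d → φ j ≤ D ^ d * φ k := by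
      intro d
      induction d with
      | zero =>
          intro j k h1 h2
          have : j = k := by omega
          subst this; simp
      | succ d ih =>
          intro j k h1 h2
          rcases lt_trichotomy j k with hlt | heq | hgt
          · have hk : 1 ≤ k := by omega
            have hih := ih j (k - 1) (by omega) (by omega)
            have h3 : φ (k - 1) ≤ D * φ k := by
              have h4 := hstep1 (k - 1)
              rwa [Nat.sub_add_cancel hk] at h4
            calc φ j ≤ D ^ d * φ (k - 1) := hih
              _ ≤ D ^ d * (D * φ k) :=
                  mul_le_mul_of_nonneg_left h3 (pow_nonneg (le_trans zero_le_one hD1) d)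
              _ = D ^ (d + 1) * φ k := by ring
          · subst heq
            exact le_mul_of_one_le_left (hpos j).le (one_le_pow₀ hD1)
          · have hih := ih j (k + 1) (by omega) (by omega)
            calc φ j ≤ D ^ d * φ (k + 1) := hih
              _ ≤ D ^ d * (D * φ k) :=
                  mul_le_mul_of_nonneg_left (hstep2 k) (pow_nonneg (le_trans zero_le_one hD1) d)
              _ = D ^ (d + 1) * φ k := by ring
    set E := D ^ N with hE
    have hE1 : (1 : ℝ) ≤ E := one_le_pow₀ hD1
    have hE0 : (0 : ℝ) < E := lt_of_lt_of_le one_pos hE1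
    have compN : ∀ j k : ℕ, j ≤ k + N → k ≤ j + N → φ j ≤ E * φ k := fun j k h1 h2 =>
      comp N j k h1 h2
    -- nonnegativity of H
    have hHnn : ∀ m n : ℕ,
        0 ≤ (∑ i ∈ Finset.Icc m (n - m), φ (N * (n - i)) * φ (N * i)) / φ (N * n) :=
      fun m n => div_nonneg
        (Finset.sum_nonneg fun i _ => mul_nonneg (hpos _).le (hpos _).le) (hpos _).le
    -- key1 : limsup nonneg
    have key1 : ∀ m : ℕ, 0 ≤ limsup
        (fun n => (∑ i ∈ Finset.Icc m (n - m), φ (N * (n - i)) * φ (N * i)) / φ (N * n)) atTop := by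
      intro m
      rw [limsup_eq]
      refine Real.sInf_nonneg (fun a ha => ?_)
      obtain ⟨n, hn⟩ := ha.exists
      exact le_trans (hHnn m n) hn
    -- key2
    have key2 : ∀ m : ℕ, limsup
        (fun n => (∑ i ∈ Finset.Icc m (n - m), φ (N * (n - i)) * φ (N * i)) / φ (N * n)) atTop
        ≤ max (limsup (fun n => (∑ i ∈ Finset.Icc (N * m) (n - N * m), φ (n - i) * φ i) / φ n) atTop) 0 := by
      intro m
      by_cases hA : {a : ℝ | ∀ᶠ n in atTop,
          (∑ i ∈ Finset.Icc m (n - m), φ (N * (n - i)) * φ (N * i)) / φ (N * n) ≤ a}.Nonempty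
      · obtain ⟨a₀, ha₀⟩ := hA
        have hdiv : Tendsto (fun k : ℕ => k / N) atTop atTop := by
          refine tendsto_atTop_atTop.2 (fun b => ⟨N * b, fun a ha => ?_⟩)
          exact (Nat.le_div_iff_mul_le hN).2 (by rw [Nat.mul_comm] at ha; exact ha)
        have hBne : {a : ℝ | ∀ᶠ n' in atTop,
            (∑ i ∈ Finset.Icc (N * m) (n' - N * m), φ (n' - i) * φ i) / φ n' ≤ a}.Nonempty := by
          refine ⟨(N * E ^ 3) * a₀, ?_⟩
          have hev := hdiv.eventually ha₀
          filter_upwards [hev] with n' hn'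
          calc (∑ i ∈ Finset.Icc (N * m) (n' - N * m), φ (n' - i) * φ i) / φ n'
              ≤ (N * E ^ 3) *
                ((∑ i ∈ Finset.Icc m (n' / N - m), φ (N * (n' / N - i)) * φ (N * i)) / φ (N * (n' / N))) :=
                bound_c N hN φ hpos E hE0 compN m n'
            _ ≤ (N * E ^ 3) * a₀ := by
                refine mul_le_mul_of_nonneg_left hn' ?_
                positivity
        have hBsub : {a : ℝ | ∀ᶠ n' in atTop,
              (∑ i ∈ Finset.Icc (N * m) (n' - N * m), φ (n' - i) * φ i) / φ n' ≤ a}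
            ⊆ {a : ℝ | ∀ᶠ n in atTop,
              (∑ i ∈ Finset.Icc m (n - m), φ (N * (n - i)) * φ (N * i)) / φ (N * n) ≤ a} := by
          intro a ha
          have hev := hNtend.eventually ha
          filter_upwards [hev] with n hn
          exact le_trans (bound_b N hN φ hpos m n) hn
        have hbdd : BddBelow {a : ℝ | ∀ᶠ n in atTop,
            (∑ i ∈ Finset.Icc m (n - m), φ (N * (n - i)) * φ (N * i)) / φ (N * n) ≤ a} := by
          refine ⟨0, fun a ha => ?_⟩
          obtain ⟨n, hn⟩ := ha.exists
          exact le_trans (hHnn m n) hn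
        have hle : limsup
            (fun n => (∑ i ∈ Finset.Icc m (n - m), φ (N * (n - i)) * φ (N * i)) / φ (N * n)) atTop
            ≤ limsup (fun n' => (∑ i ∈ Finset.Icc (N * m) (n' - N * m), φ (n' - i) * φ i) / φ n') atTop := by
          rw [limsup_eq, limsup_eq]
          exact csInf_le_csInf hbdd hBne hBsub
        exact le_trans hle (le_max_left _ _)
      · rw [limsup_eq, Set.not_nonempty_iff_eq_empty.1 hA, Real.sInf_empty]
        exact le_max_right _ _
    -- assemble
    have hcomp0 : Tendsto (fun m => limsup
        (fun n => (∑ i ∈ Finset.Icc (N * m) (n - N * m), φ (n - i) * φ i) / φ n) atTop)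
        atTop (𝓝 0) := hlim.comp hNtend
    have hmax : Tendsto (fun m => max (limsup
        (fun n => (∑ i ∈ Finset.Icc (N * m) (n - N * m), φ (n - i) * φ i) / φ n) atTop) 0)
        atTop (𝓝 0) := by
      have h := hcomp0.max (tendsto_const_nhds : Tendsto (fun _ : ℕ => (0 : ℝ)) atTop (𝓝 0))
      simpa using h
    exact tendsto_of_tendsto_of_tendsto_of_le_of_le tendsto_const_nhds hmax key1 key2
end

section
/- Let {U(n)}_{n≥0} be a sequence of d×d real matrices, let N be a positive integer and let 0 < r ≤ 1. Suppose that all the series below converge and that max_{1≤p≤d} ( Σ_{q=1}^d Σ_{i=0}^{N-1} Σ_{l=0}^∞ r^{-N(l+1)} |U(Nl+i)|_{p,q} ) < 1. Define the Nd×Nd matrices B and J(n) (n ≥ 0) by their d×d blocks: (I−B)_{i,j} = 0 for i < j, = I_d for i = j, = −U(i−j−1) for i > j; and J(n)_{i,j} = U(Nn+N+i−j−1) for i ≤ j, = U(N(n+1)+i−j−1) for i > j (i, j ∈ {1,…,N}). Set F(n) := (I−B)^{-1} J(n). Then the series Σ_{i=0}^∞ r^{-N(i+1)} |F(i)| converges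 entrywise and ‖ Σ_{i=0}^∞ r^{-N(i+1)} |F(i)| ‖_∞ < 1. -/
/-- Lemma 2.6 of the paper: the weighted row sums of `F(n) = (I-B)⁻¹ J(n)` are
strictly bounded by 1 under the smallness condition on `U`. -/
theorem stmt3 (d N : ℕ) (hd : 0 < d) (hN : 0 < N) (r : ℝ) (hr0 : 0 < r) (hr1 : r ≤ 1)
    (U : ℕ → Matrix (Fin d) (Fin d) ℝ)
    (hsum : ∀ (p q : Fin d) (i : ℕ), i < N →
      Summable (fun l : ℕ => |U (N * l + i) p q| / r ^ (N * (l + 1))))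
    (hbound : ∀ p : Fin d,
      ∑ q : Fin d, ∑ i ∈ Finset.range N,
        ∑' l : ℕ, |U (N * l + i) p q| / r ^ (N * (l + 1)) < 1)
    (B : Matrix (Fin N × Fin d) (Fin N × Fin d) ℝ)
    (hB : ∀ (i j : Fin N) (p q : Fin d),
      (1 - B) (i, p) (j, q) =
        if (i : ℕ) < (j : ℕ) then 0
        else if (i : ℕ) = (j : ℕ) then (1 : Matrix (Fin d) (Fin d) ℝ) p q
        else -U ((i : ℕ) - (j : ℕ) - 1) p q)
    (J : ℕ → Matrix (Fin N × Fin d) (Fin N × Fin d) ℝ)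
    (hJ : ∀ (n : ℕ) (i j : Fin N) (p q : Fin d),
      J n (i, p) (j, q) =
        if (i : ℕ) ≤ (j : ℕ) then U (N * n + N + (i : ℕ) - (j : ℕ) - 1) p q
        else U (N * (n + 1) + (i : ℕ) - (j : ℕ) - 1) p q)
    (F : ℕ → Matrix (Fin N × Fin d) (Fin N × Fin d) ℝ)
    (hF : ∀ n, F n = (1 - B)⁻¹ * J n) :
    (∀ x y : Fin N × Fin d, Summable (fun n : ℕ => |F n x y| / r ^ (N * (n + 1)))) ∧
    ∀ x : Fin N × Fin d,
      ∑ y : Fin N × Fin d, ∑' n : ℕ, |F n x y| / r ^ (N * (n + 1)) < 1 := by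
  -- entries of B
  have hBentry : ∀ x y : Fin N × Fin d,
      B x y = if (y.1 : ℕ) < (x.1 : ℕ) then U ((x.1 : ℕ) - (y.1 : ℕ) - 1) x.2 y.2 else 0 := by
    rintro ⟨i, p⟩ ⟨j, q⟩
    have h0 : B (i, p) (j, q) =
        (1 : Matrix (Fin N × Fin d) (Fin N × Fin d) ℝ) (i, p) (j, q) - (1 - B) (i, p) (j, q) := by
      simp [Matrix.sub_apply]
    rw [h0, hB]
    rcases lt_trichotomy (i : ℕ) (j : ℕ) with h | h | h
    · have hne : ((i, p) : Fin N × Fin d) ≠ (j, q) := by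
        intro he
        have : (i : ℕ) = j := by rw [Prod.ext_iff] at he; exact congrArg Fin.val he.1
        omega
      rw [Matrix.one_apply_ne hne]
      rw [if_pos h, if_neg (by omega : ¬ (j : ℕ) < (i : ℕ))]
      ring
    · have hij : i = j := Fin.ext h
      subst hij
      rw [if_neg (lt_irrefl _), if_pos rfl, if_neg (by omega : ¬ (i : ℕ) < (i : ℕ))]
      by_cases hpq : p = q
      · subst hpq
        rw [Matrix.one_apply_eq, Matrix.one_apply_eq]; ring
      · rw [Matrix.one_apply_ne (by simp [Prod.ext_iff, hpq]), Matrix.one_apply_ne hpq]; ring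
    · have hne : ((i, p) : Fin N × Fin d) ≠ (j, q) := by
        intro he
        have : (i : ℕ) = j := by rw [Prod.ext_iff] at he; exact congrArg Fin.val he.1
        omega
      rw [Matrix.one_apply_ne hne, if_neg (by omega : ¬ (i : ℕ) < (j : ℕ)),
        if_neg (by omega : ¬ (i : ℕ) = (j : ℕ)), if_pos h]
      ring
  -- nilpotency-like vanishing
  have hnil : ∀ (k : ℕ) (x y : Fin N × Fin d), (x.1 : ℕ) < (y.1 : ℕ) + k → (B ^ k) x y = 0 := by
    intro k
    induction k with
    | zero =>
      intro x y hxy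
      have hne : x ≠ y := by
        intro he; subst he; omega
      simp [Matrix.one_apply_ne hne]
    | succ k ih =>
      intro x y hxy
      rw [pow_succ, Matrix.mul_apply]
      apply Finset.sum_eq_zero
      intro z _
      by_cases hz : (x.1 : ℕ) < (z.1 : ℕ) + k
      · rw [ih x z hz, zero_mul]
      · have : ¬ (y.1 : ℕ) < (z.1 : ℕ) := by omega
        rw [hBentry z y, if_neg (by omega : ¬ (y.1 : ℕ) < (z.1 : ℕ)), mul_zero]
  have hBN : B ^ N = 0 := by
    ext x y
    rw [hnil N x y (by omega : (x.1 : ℕ) < (y.1 : ℕ) + N)]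
    simp
  set C : Matrix (Fin N × Fin d) (Fin N × Fin d) ℝ := ∑ k ∈ Finset.range N, B ^ k with hC
  have hsumsucc : ∑ k ∈ Finset.range N, B ^ (k + 1) = C - 1 := by
    have h1 : ∑ k ∈ Finset.range (N + 1), B ^ k = (∑ k ∈ Finset.range N, B ^ (k + 1)) + B ^ 0 :=
      Finset.sum_range_succ' _ N
    have h2 : ∑ k ∈ Finset.range (N + 1), B ^ k = C + B ^ N := Finset.sum_range_succ _ N
    rw [hBN, add_zero] at h2
    rw [h2, pow_zero] at h1
    rw [eq_sub_iff_add_eq, h1]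
  have hBC : B * C = C - 1 := by
    rw [hC, Finset.mul_sum, ← hsumsucc]
    exact Finset.sum_congr rfl fun k _ => (pow_succ' B k).symm
  have hCB : C * B = C - 1 := by
    rw [hC, Finset.sum_mul, ← hsumsucc]
    exact Finset.sum_congr rfl fun k _ => (pow_succ B k).symm
  have hright : (1 - B) * C = 1 := by
    rw [Matrix.sub_mul, Matrix.one_mul, hBC, sub_sub_cancel]
  have hleft : C * (1 - B) = 1 := by
    rw [Matrix.mul_sub, Matrix.mul_one, hCB, sub_sub_cancel]
  have hinv : (1 - B)⁻¹ = C := Matrix.inv_eq_right_inv hright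
  have hFC : ∀ n, F n = C * J n := by
    intro n; rw [hF n, hinv]
  have hrec : ∀ n, F n = J n + B * F n := by
    intro n
    have : (1 - B) * F n = J n := by
      rw [hFC n, ← Matrix.mul_assoc, hright, Matrix.one_mul]
    rw [Matrix.sub_mul, Matrix.one_mul] at this
    exact sub_eq_iff_eq_add.mp this
  -- summability of weighted J entries
  have hrpos : ∀ k : ℕ, (0:ℝ) < r ^ k := fun k => pow_pos hr0 k
  have hrmono : ∀ a b : ℕ, a ≤ b → r ^ b ≤ r ^ a := fun a b h =>
    pow_le_pow_of_le_one hr0.le hr1 h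
  have hJsum : ∀ x y : Fin N × Fin d, Summable (fun n : ℕ => |J n x y| / r ^ (N * (n + 1))) := by
    rintro ⟨i, p⟩ ⟨j, q⟩
    have hjN : (j : ℕ) < N := j.isLt
    have hiN : (i : ℕ) < N := i.isLt
    by_cases hij : (i : ℕ) ≤ (j : ℕ)
    · have hm : N + (i : ℕ) - (j : ℕ) - 1 < N := by omega
      have heq : (fun n : ℕ => |J n (i, p) (j, q)| / r ^ (N * (n + 1))) =
          fun n : ℕ => |U (N * n + (N + (i : ℕ) - (j : ℕ) - 1)) p q| / r ^ (N * (n + 1)) := by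
        funext n
        rw [hJ n i j p q, if_pos hij]
        have : N * n + N + (i : ℕ) - (j : ℕ) - 1 = N * n + (N + (i : ℕ) - (j : ℕ) - 1) := by
          omega
        rw [this]
      rw [heq]
      exact hsum p q _ hm
    · have hm : (i : ℕ) - (j : ℕ) - 1 < N := by omega
      have hf1 : Summable (fun n : ℕ =>
          |U (N * (n + 1) + ((i : ℕ) - (j : ℕ) - 1)) p q| / r ^ (N * (n + 1 + 1))) :=
        (summable_nat_add_iff
          (f := fun l : ℕ => |U (N * l + ((i : ℕ) - (j : ℕ) - 1)) p q| / r ^ (N * (l + 1)))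
          1).mpr (hsum p q _ hm)
      apply Summable.of_nonneg_of_le
        (fun n => div_nonneg (abs_nonneg _) (hrpos _).le) _ hf1
      intro n
      rw [hJ n i j p q, if_neg (by omega : ¬ (i : ℕ) ≤ (j : ℕ))]
      have harg : N * (n + 1) + (i : ℕ) - (j : ℕ) - 1 =
          N * (n + 1) + ((i : ℕ) - (j : ℕ) - 1) := by omega
      rw [harg]
      apply div_le_div_of_nonneg_left (abs_nonneg _) (hrpos _)
      exact hrmono _ _ (by nlinarith)
  -- summability of weighted F entries
  have hFsum : ∀ x y : Fin N × Fin d, Summable (fun n : ℕ => |F n x y| / r ^ (N * (n + 1))) := by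
    intro x y
    refine Summable.of_nonneg_of_le (f := fun n => ∑ z, |C x z| * (|J n z y| / r ^ (N * (n + 1))))
      (fun n => div_nonneg (abs_nonneg _) (hrpos _).le) ?_ ?_
    · intro n
      have h1 : |F n x y| ≤ ∑ z, |C x z| * |J n z y| := by
        rw [hFC n, Matrix.mul_apply]
        refine (Finset.abs_sum_le_sum_abs _ _).trans (le_of_eq ?_)
        exact Finset.sum_congr rfl fun z _ => abs_mul _ _
      calc |F n x y| / r ^ (N * (n + 1)) ≤ (∑ z, |C x z| * |J n z y|) / r ^ (N * (n + 1)) := by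
            exact div_le_div_of_nonneg_right h1 (hrpos _).le
        _ = ∑ z, |C x z| * (|J n z y| / r ^ (N * (n + 1))) := by
            rw [Finset.sum_div]
            exact Finset.sum_congr rfl fun z _ => (mul_div_assoc _ _ _)
    · exact summable_sum fun z _ => ((hJsum z y).mul_left _)
  refine ⟨hFsum, ?_⟩
  -- notation
  set T : Fin d → Fin d → ℕ → ℝ :=
    fun p q m => ∑' l : ℕ, |U (N * l + m) p q| / r ^ (N * (l + 1)) with hT
  have hTnonneg : ∀ p q m, 0 ≤ T p q m :=
    fun p q m => tsum_nonneg fun l => div_nonneg (abs_nonneg _) (hrpos _).le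
  set V : Fin N × Fin d → ℝ :=
    fun x => ∑ y : Fin N × Fin d, ∑' n : ℕ, |J n x y| / r ^ (N * (n + 1)) with hV
  set A : Fin N × Fin d → ℝ := fun x => ∑ z : Fin N × Fin d, |B x z| with hA
  set G : Fin N × Fin d → ℝ :=
    fun x => ∑ y : Fin N × Fin d, ∑' n : ℕ, |F n x y| / r ^ (N * (n + 1)) with hG
  have hKlt : ∀ p : Fin d, ∑ q : Fin d, ∑ m ∈ Finset.range N, T p q m < 1 := hbound
  -- the key combinatorial estimate
  have hVA : ∀ x : Fin N × Fin d, V x + A x ≤ ∑ q : Fin d, ∑ m ∈ Finset.range N, T x.2 q m := by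
    rintro ⟨i, p⟩
    have hiN : (i : ℕ) < N := i.isLt
    have hVsplit : V (i, p) =
        ∑ q : Fin d, ∑ j : Fin N, ∑' n : ℕ, |J n (i, p) (j, q)| / r ^ (N * (n + 1)) := by
      simp only [hV]
      rw [Fintype.sum_prod_type]
      exact Finset.sum_comm
    have hAsplit : A (i, p) = ∑ q : Fin d, ∑ j : Fin N, |B (i, p) (j, q)| := by
      simp only [hA]
      rw [Fintype.sum_prod_type]
      exact Finset.sum_comm
    rw [hVsplit, hAsplit, ← Finset.sum_add_distrib]
    refine Finset.sum_le_sum fun q _ => ?_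
    rw [← Finset.sum_add_distrib]
    -- per column block q : sum over j of L j ≤ sum over m of T p q m
    set τ : Fin N → ℕ := fun j =>
      if (j : ℕ) < (i : ℕ) then (i : ℕ) - (j : ℕ) - 1 else N + (i : ℕ) - (j : ℕ) - 1 with hτ
    have hτlt : ∀ j : Fin N, τ j < N := by
      intro j
      have := j.isLt
      simp only [hτ]
      split <;> omega
    have hτinj : Function.Injective τ := by
      intro j1 j2 h
      have h1 := j1.isLt
      have h2 := j2.isLt
      simp only [hτ] at h
      apply Fin.ext
      by_cases c1 : (j1 : ℕ) < (i : ℕ) <;> by_cases c2 : (j2 : ℕ) < (i : ℕ) <;>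
        simp only [c1, c2, if_true, if_false, if_pos, if_neg] at h <;> omega
    have hterm : ∀ j : Fin N,
        (∑' n : ℕ, |J n (i, p) (j, q)| / r ^ (N * (n + 1))) + |B (i, p) (j, q)| ≤
          T p q (τ j) := by
      intro j
      have hjN : (j : ℕ) < N := j.isLt
      by_cases hji : (j : ℕ) < (i : ℕ)
      · -- lower block: τ j = i - j - 1
        set m : ℕ := (i : ℕ) - (j : ℕ) - 1 with hm
        have hmN : m < N := by omega
        have hτj : τ j = m := by simp only [hτ]; rw [if_pos hji]
        rw [hτj]
        have hBj : |B (i, p) (j, q)| = |U m p q| := by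
          rw [hBentry (i, p) (j, q), if_pos hji]
        have hJj : (fun n : ℕ => |J n (i, p) (j, q)| / r ^ (N * (n + 1))) =
            fun n : ℕ => |U (N * (n + 1) + m) p q| / r ^ (N * (n + 1)) := by
          funext n
          rw [hJ n i j p q, if_neg (by omega : ¬ (i : ℕ) ≤ (j : ℕ))]
          have : N * (n + 1) + (i : ℕ) - (j : ℕ) - 1 = N * (n + 1) + m := by omega
          rw [this]
        rw [hBj, hJj]
        -- T p q m = f 0 + ∑' f (l+1)
        have hf : Summable (fun l : ℕ => |U (N * l + m) p q| / r ^ (N * (l + 1))) :=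
          hsum p q m hmN
        have hf1 : Summable (fun l : ℕ => |U (N * (l + 1) + m) p q| / r ^ (N * (l + 1 + 1))) :=
          (summable_nat_add_iff
            (f := fun l : ℕ => |U (N * l + m) p q| / r ^ (N * (l + 1))) 1).mpr hf
        have hTsplit : T p q m = |U (N * 0 + m) p q| / r ^ (N * (0 + 1)) +
            ∑' l : ℕ, |U (N * (l + 1) + m) p q| / r ^ (N * (l + 1 + 1)) := by
          simp only [hT]
          exact Summable.tsum_eq_zero_add hf
        rw [hTsplit]
        have hle1 : ∑' n : ℕ, |U (N * (n + 1) + m) p q| / r ^ (N * (n + 1)) ≤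
            ∑' l : ℕ, |U (N * (l + 1) + m) p q| / r ^ (N * (l + 1 + 1)) := by
          refine Summable.tsum_le_tsum (fun n => ?_) ?_ hf1
          · exact div_le_div_of_nonneg_left (abs_nonneg _) (hrpos _)
              (hrmono _ _ (by nlinarith))
          · refine Summable.of_nonneg_of_le
              (fun n => div_nonneg (abs_nonneg _) (hrpos _).le) (fun n => ?_) hf1
            exact div_le_div_of_nonneg_left (abs_nonneg _) (hrpos _)
              (hrmono _ _ (by nlinarith))
        have hle2 : |U m p q| ≤ |U (N * 0 + m) p q| / r ^ (N * (0 + 1)) := by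
          have hm0 : N * 0 + m = m := by omega
          rw [hm0]
          rw [le_div_iff₀ (hrpos _)]
          have hr1' : r ^ (N * (0 + 1)) ≤ 1 := by
            calc r ^ (N * (0 + 1)) ≤ r ^ 0 := hrmono 0 _ (Nat.zero_le _)
            _ = 1 := pow_zero r
          nlinarith [abs_nonneg (U m p q)]
        linarith
      · -- upper block: τ j = N + i - j - 1, exact equality with T
        set m : ℕ := N + (i : ℕ) - (j : ℕ) - 1 with hm
        have hτj : τ j = m := by simp only [hτ]; rw [if_neg hji]
        rw [hτj]
        have hBj : |B (i, p) (j, q)| = 0 := by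
          rw [hBentry (i, p) (j, q), if_neg hji, abs_zero]
        have hJj : (fun n : ℕ => |J n (i, p) (j, q)| / r ^ (N * (n + 1))) =
            fun n : ℕ => |U (N * n + m) p q| / r ^ (N * (n + 1)) := by
          funext n
          rw [hJ n i j p q, if_pos (by omega : (i : ℕ) ≤ (j : ℕ))]
          have : N * n + N + (i : ℕ) - (j : ℕ) - 1 = N * n + m := by omega
          rw [this]
        rw [hBj, hJj, add_zero]
    calc ∑ j : Fin N, ((∑' n : ℕ, |J n (i, p) (j, q)| / r ^ (N * (n + 1))) + |B (i, p) (j, q)|)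
        ≤ ∑ j : Fin N, T p q (τ j) := Finset.sum_le_sum fun j _ => hterm j
      _ = ∑ m ∈ Finset.univ.image τ, T p q m :=
          (Finset.sum_image fun a _ b _ h => hτinj h).symm
      _ ≤ ∑ m ∈ Finset.range N, T p q m := by
          refine Finset.sum_le_sum_of_subset_of_nonneg ?_ fun m _ _ => hTnonneg p q m
          intro m hm
          rw [Finset.mem_image] at hm
          obtain ⟨j, _, rfl⟩ := hm
          exact Finset.mem_range.mpr (hτlt j)
  -- the recursive estimate
  have hGle : ∀ x : Fin N × Fin d, G x ≤ V x + ∑ z : Fin N × Fin d, |B x z| * G z := by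
    intro x
    have step : ∀ y : Fin N × Fin d,
        (∑' n : ℕ, |F n x y| / r ^ (N * (n + 1))) ≤
          (∑' n : ℕ, |J n x y| / r ^ (N * (n + 1))) +
            ∑ z : Fin N × Fin d, |B x z| * ∑' n : ℕ, |F n z y| / r ^ (N * (n + 1)) := by
      intro y
      have hsumR : Summable (fun n : ℕ => |J n x y| / r ^ (N * (n + 1)) +
          ∑ z : Fin N × Fin d, |B x z| * (|F n z y| / r ^ (N * (n + 1)))) :=
        (hJsum x y).add (summable_sum fun z _ => ((hFsum z y).mul_left _))
      have hptw : ∀ n : ℕ, |F n x y| / r ^ (N * (n + 1)) ≤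
          |J n x y| / r ^ (N * (n + 1)) +
            ∑ z : Fin N × Fin d, |B x z| * (|F n z y| / r ^ (N * (n + 1))) := by
        intro n
        have h1 : |F n x y| ≤ |J n x y| + ∑ z : Fin N × Fin d, |B x z| * |F n z y| := by
          have h2 : F n x y = J n x y + ∑ z : Fin N × Fin d, B x z * F n z y := by
            conv_lhs => rw [hrec n]
            rw [Matrix.add_apply, Matrix.mul_apply]
          rw [h2]
          refine (abs_add_le _ _).trans (add_le_add_right ?_ _)
          refine (Finset.abs_sum_le_sum_abs _ _).trans (le_of_eq ?_)
          exact Finset.sum_congr rfl fun z _ => abs_mul _ _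
        calc |F n x y| / r ^ (N * (n + 1)) ≤
            (|J n x y| + ∑ z : Fin N × Fin d, |B x z| * |F n z y|) / r ^ (N * (n + 1)) :=
              div_le_div_of_nonneg_right h1 (hrpos _).le
          _ = |J n x y| / r ^ (N * (n + 1)) +
              ∑ z : Fin N × Fin d, |B x z| * (|F n z y| / r ^ (N * (n + 1))) := by
            rw [add_div, Finset.sum_div]
            congr 1
            exact Finset.sum_congr rfl fun z _ => (mul_div_assoc _ _ _)
      calc (∑' n : ℕ, |F n x y| / r ^ (N * (n + 1))) ≤
          ∑' n : ℕ, (|J n x y| / r ^ (N * (n + 1)) +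
            ∑ z : Fin N × Fin d, |B x z| * (|F n z y| / r ^ (N * (n + 1)))) :=
            Summable.tsum_le_tsum hptw (hFsum x y) hsumR
        _ = (∑' n : ℕ, |J n x y| / r ^ (N * (n + 1))) +
            ∑' n : ℕ, ∑ z : Fin N × Fin d, |B x z| * (|F n z y| / r ^ (N * (n + 1))) := by
            rw [Summable.tsum_add (hJsum x y) (summable_sum fun z _ => ((hFsum z y).mul_left _))]
        _ = (∑' n : ℕ, |J n x y| / r ^ (N * (n + 1))) +
            ∑ z : Fin N × Fin d, |B x z| * ∑' n : ℕ, |F n z y| / r ^ (N * (n + 1)) := by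
            congr 1
            rw [Summable.tsum_finsetSum fun z _ => ((hFsum z y).mul_left _)]
            exact Finset.sum_congr rfl fun z _ => tsum_mul_left
    calc G x ≤ ∑ y : Fin N × Fin d, ((∑' n : ℕ, |J n x y| / r ^ (N * (n + 1))) +
          ∑ z : Fin N × Fin d, |B x z| * ∑' n : ℕ, |F n z y| / r ^ (N * (n + 1))) :=
            Finset.sum_le_sum fun y _ => step y
      _ = V x + ∑ z : Fin N × Fin d, |B x z| * G z := by
          rw [Finset.sum_add_distrib]
          congr 1
          rw [Finset.sum_comm]
          refine Finset.sum_congr rfl fun z _ => ?_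
          rw [← Finset.mul_sum]
  -- main induction on the block row index
  have main : ∀ k : ℕ, ∀ x : Fin N × Fin d, (x.1 : ℕ) = k →
      G x ≤ ∑ q : Fin d, ∑ m ∈ Finset.range N, T x.2 q m := by
    intro k
    induction k using Nat.strong_induction_on with
    | _ k ih =>
      intro x hx
      have h2 : ∑ z : Fin N × Fin d, |B x z| * G z ≤ ∑ z : Fin N × Fin d, |B x z| := by
        refine Finset.sum_le_sum fun z _ => ?_
        by_cases hz : (z.1 : ℕ) < (x.1 : ℕ)
        · have hGz : G z ≤ 1 :=
            le_of_lt (lt_of_le_of_lt (ih (z.1 : ℕ) (by omega) z rfl) (hKlt z.2))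
          calc |B x z| * G z ≤ |B x z| * 1 := mul_le_mul_of_nonneg_left hGz (abs_nonneg _)
            _ = |B x z| := mul_one _
        · rw [hBentry x z, if_neg hz, abs_zero, zero_mul]
      have h1 := hGle x
      have h3 := hVA x
      have h4 : A x = ∑ z : Fin N × Fin d, |B x z| := rfl
      linarith
  intro x
  have := lt_of_le_of_lt (main (x.1 : ℕ) x rfl) (hKlt x.2)
  exact this
end

section
/- Let U : ℕ → ℝ^{d×d}, let N be a positive integer, let 0 < r ≤ 1, and let Z be the resolvent of U. Suppose all the series below converge and max_{1≤p≤d} ( Σ_{q=1}^d Σ_{i=0}^{N-1} Σ_{l=0}^∞ r^{-N(l+1)} |U(Nl+i)|_{p,q} ) < 1. Then the series Σ_{i=0}^{N-1} Σ_{n=0}^∞ r^{-N(n+1)} |Z(Nn+i)| converges entrywise, and setting A := Σ_{i=0}^{N-1} Σ_{n=0}^∞ r^{-N(n+1)} |Z(Nn+i)| and B := Σ_{i=0}^{N-1} Σ_{n=0}^∞ r^{-N(n+1)} |U(Nn+i)|, the entrywise inequality A ≤ r^{-N} I + B·A holds. -/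
private lemma weight_mul (N : ℕ) (hN : 0 < N) (r : ℝ) (hr0 : 0 < r) (hr1 : r ≤ 1) (a b : ℕ) :
    (r ^ (N * ((a + b + 1) / N + 1)))⁻¹
      ≤ (r ^ (N * (a / N + 1)))⁻¹ * (r ^ (N * (b / N + 1)))⁻¹ := by
  rw [← mul_inv, ← pow_add]
  have h1 : a < (a / N + 1) * N := (Nat.div_lt_iff_lt_mul hN).1 (Nat.lt_succ_self _)
  have h2 : b < (b / N + 1) * N := (Nat.div_lt_iff_lt_mul hN).1 (Nat.lt_succ_self _)
  have h4 : a + b + 1 < (a / N + b / N + 2) * N := by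
    calc a + b + 1 < a + 1 + (b + 1) := by omega
    _ ≤ (a / N + 1) * N + (b / N + 1) * N := Nat.add_le_add h1 h2
    _ = (a / N + b / N + 2) * N := by ring
  have hdiv : (a + b + 1) / N ≤ a / N + b / N + 1 :=
    Nat.lt_succ_iff.mp ((Nat.div_lt_iff_lt_mul hN).2 h4)
  have hexp : N * ((a + b + 1) / N + 1) ≤ N * (a / N + 1) + N * (b / N + 1) := by
    calc N * ((a + b + 1) / N + 1) ≤ N * (a / N + b / N + 2) :=
      Nat.mul_le_mul_left _ (by omega)
    _ = N * (a / N + 1) + N * (b / N + 1) := by ring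
  exact inv_anti₀ (pow_pos hr0 _) (pow_le_pow_of_le_one hr0.le hr1 hexp)

private lemma reindex_nat (N : ℕ) (hN : 0 < N) (h : ℕ → ℝ) (h0 : ∀ m, 0 ≤ h m)
    (hs : ∀ i, i < N → Summable fun l : ℕ => h (N * l + i)) :
    Summable h ∧ ∑' m, h m = ∑ i ∈ Finset.range N, ∑' l : ℕ, h (N * l + i) := by
  haveI : NeZero N := ⟨hN.ne'⟩
  let e : ℕ ≃ Fin N × ℕ := (Nat.divModEquiv N).trans (Equiv.prodComm _ _)
  have he : ∀ p : Fin N × ℕ, h (e.symm p) = h (N * p.2 + ↑p.1) := by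
    intro p
    have : (e.symm p : ℕ) = N * p.2 + ↑p.1 := by
      simp [e, Nat.divModEquiv]; ring
    rw [this]
  have hS : Summable (h ∘ e.symm) := by
    apply (summable_prod_of_nonneg ?_).2
    constructor
    · intro i
      have : (fun l => (h ∘ e.symm) (i, l)) = fun l => h (N * l + ↑i) := by
        funext l; exact he (i, l)
      rw [this]; exact hs i i.2
    · exact Summable.of_finite
    · intro x; exact h0 _
  have hSh : Summable h := by
    rwa [← Equiv.summable_iff e.symm]
  refine ⟨hSh, ?_⟩
  have t1 : ∑' p : Fin N × ℕ, h (e.symm p) = ∑' m, h m := e.symm.tsum_eq h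
  have hS' : Summable fun p : Fin N × ℕ => h (N * p.2 + ↑p.1) := by
    have : (fun p : Fin N × ℕ => h (N * p.2 + ↑p.1)) = h ∘ e.symm := by
      funext p; exact (he p).symm
    rw [this]; exact hS
  rw [← t1, tsum_congr he, Summable.tsum_prod' hS' (fun b => by simpa using hs b b.2), tsum_fintype,
    ← Fin.sum_univ_eq_sum_range (fun i => ∑' l : ℕ, h (N * l + i))]

private lemma conv_bound (K : ℕ) (F G : ℕ → ℝ) (hF : ∀ n, 0 ≤ F n) (hG : ∀ n, 0 ≤ G n)
    (hFs : Summable F) :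
    ∑ k ∈ Finset.range K, ∑ j ∈ Finset.range (k + 1), F (k - j) * G j
      ≤ (∑' m, F m) * ∑ j ∈ Finset.range (K + 1), G j := by
  have hT0 : 0 ≤ ∑' m, F m := tsum_nonneg hF
  have swap : ∑ k ∈ Finset.range K, ∑ j ∈ Finset.range (k + 1), F (k - j) * G j
      = ∑ j ∈ Finset.range K, ∑ k ∈ Finset.Ico j K, F (k - j) * G j := by
    apply Finset.sum_comm'
    intro k j
    simp only [Finset.mem_range, Finset.mem_Ico]
    omega
  rw [swap]
  have step : ∀ j ∈ Finset.range K, ∑ k ∈ Finset.Ico j K, F (k - j) * G j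
      ≤ (∑' m, F m) * G j := by
    intro j _
    rw [← Finset.sum_mul]
    apply mul_le_mul_of_nonneg_right _ (hG j)
    rw [Finset.sum_Ico_eq_sum_range]
    have : ∀ i, F (j + i - j) = F i := by intro i; congr 1; omega
    calc ∑ i ∈ Finset.range (K - j), F (j + i - j)
        = ∑ i ∈ Finset.range (K - j), F i := Finset.sum_congr rfl (fun i _ => this i)
      _ ≤ ∑' m, F m := Summable.sum_le_tsum _ (fun i _ => hF i) hFs
  calc ∑ j ∈ Finset.range K, ∑ k ∈ Finset.Ico j K, F (k - j) * G j
      ≤ ∑ j ∈ Finset.range K, (∑' m, F m) * G j := Finset.sum_le_sum step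
    _ ≤ ∑ j ∈ Finset.range (K + 1), (∑' m, F m) * G j :=
        Finset.sum_le_sum_of_subset_of_nonneg
          (Finset.range_subset_range.2 (by omega))
          (fun j _ _ => mul_nonneg hT0 (hG j))
    _ = (∑' m, F m) * ∑ j ∈ Finset.range (K + 1), G j := by rw [Finset.mul_sum]
private lemma main_ineq (d N : ℕ) (hN : 0 < N) (r : ℝ) (hr0 : 0 < r) (hr1 : r ≤ 1)
    (U Z : ℕ → Matrix (Fin d) (Fin d) ℝ) (hZ0 : Z 0 = 1)
    (hZ : ∀ n, Z (n + 1) = ∑ j ∈ Finset.range (n + 1), U (n - j) * Z j)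
    (hUsum : ∀ p s : Fin d, Summable fun m => |U m p s| * (r ^ (N * (m / N + 1)))⁻¹)
    (M : ℕ) (p q : Fin d) :
    ∑ m ∈ Finset.range M, |Z m p q| * (r ^ (N * (m / N + 1)))⁻¹
      ≤ (r ^ N)⁻¹ * (1 : Matrix (Fin d) (Fin d) ℝ) p q
        + ∑ s : Fin d, (∑' m, |U m p s| * (r ^ (N * (m / N + 1)))⁻¹)
            * (∑ j ∈ Finset.range M, |Z j s q| * (r ^ (N * (j / N + 1)))⁻¹) := by
  have hw0 : ∀ m : ℕ, 0 ≤ (r ^ (N * (m / N + 1)))⁻¹ := fun m => by positivity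
  have h1nn : 0 ≤ (r ^ N)⁻¹ * (1 : Matrix (Fin d) (Fin d) ℝ) p q := by
    rw [Matrix.one_apply]
    split <;> positivity
  match M with
  | 0 =>
    simp only [Finset.range_zero, Finset.sum_empty, mul_zero, Finset.sum_const_zero, add_zero]
    exact h1nn
  | K + 1 =>
    rw [Finset.sum_range_succ']
    have hZ0t : |Z 0 p q| * (r ^ (N * (0 / N + 1)))⁻¹
        = (r ^ N)⁻¹ * (1 : Matrix (Fin d) (Fin d) ℝ) p q := by
      rw [hZ0, Nat.zero_div, zero_add, mul_one, mul_comm]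
      congr 1
      rw [Matrix.one_apply]
      split <;> simp
    rw [hZ0t, add_comm]
    apply add_le_add_right
    -- termwise bound
    have hterm : ∀ k : ℕ, |Z (k + 1) p q| * (r ^ (N * ((k + 1) / N + 1)))⁻¹
        ≤ ∑ s : Fin d, ∑ j ∈ Finset.range (k + 1),
            (|U (k - j) p s| * (r ^ (N * ((k - j) / N + 1)))⁻¹)
              * (|Z j s q| * (r ^ (N * (j / N + 1)))⁻¹) := by
      intro k
      have habs : |Z (k + 1) p q| ≤ ∑ j ∈ Finset.range (k + 1), ∑ s : Fin d,
          |U (k - j) p s| * |Z j s q| := by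
        rw [hZ k]
        calc |(∑ j ∈ Finset.range (k + 1), U (k - j) * Z j) p q|
            = |∑ j ∈ Finset.range (k + 1), ∑ s : Fin d, U (k - j) p s * Z j s q| := by
              rw [Matrix.sum_apply]
              simp only [Matrix.mul_apply]
          _ ≤ ∑ j ∈ Finset.range (k + 1), |∑ s : Fin d, U (k - j) p s * Z j s q| :=
              Finset.abs_sum_le_sum_abs _ _
          _ ≤ ∑ j ∈ Finset.range (k + 1), ∑ s : Fin d, |U (k - j) p s * Z j s q| :=
              Finset.sum_le_sum (fun j _ => Finset.abs_sum_le_sum_abs _ _)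
          _ = ∑ j ∈ Finset.range (k + 1), ∑ s : Fin d, |U (k - j) p s| * |Z j s q| := by
              simp [abs_mul]
      calc |Z (k + 1) p q| * (r ^ (N * ((k + 1) / N + 1)))⁻¹
          ≤ (∑ j ∈ Finset.range (k + 1), ∑ s : Fin d, |U (k - j) p s| * |Z j s q|)
              * (r ^ (N * ((k + 1) / N + 1)))⁻¹ :=
            mul_le_mul_of_nonneg_right habs (hw0 _)
        _ = ∑ j ∈ Finset.range (k + 1), ∑ s : Fin d,
              (|U (k - j) p s| * |Z j s q|) * (r ^ (N * ((k + 1) / N + 1)))⁻¹ := by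
            rw [Finset.sum_mul]; congr 1; funext j; rw [Finset.sum_mul]
        _ ≤ ∑ j ∈ Finset.range (k + 1), ∑ s : Fin d,
              (|U (k - j) p s| * |Z j s q|)
                * ((r ^ (N * ((k - j) / N + 1)))⁻¹ * (r ^ (N * (j / N + 1)))⁻¹) := by
            apply Finset.sum_le_sum; intro j hj
            apply Finset.sum_le_sum; intro s _
            apply mul_le_mul_of_nonneg_left _ (by positivity)
            have hj' : j ≤ k := by simp only [Finset.mem_range] at hj; omega
            have : k - j + j + 1 = k + 1 := by omega
            calc (r ^ (N * ((k + 1) / N + 1)))⁻¹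
                = (r ^ (N * ((k - j + j + 1) / N + 1)))⁻¹ := by rw [this]
              _ ≤ (r ^ (N * ((k - j) / N + 1)))⁻¹ * (r ^ (N * (j / N + 1)))⁻¹ :=
                  weight_mul N hN r hr0 hr1 _ _
        _ = ∑ s : Fin d, ∑ j ∈ Finset.range (k + 1),
              (|U (k - j) p s| * (r ^ (N * ((k - j) / N + 1)))⁻¹)
                * (|Z j s q| * (r ^ (N * (j / N + 1)))⁻¹) := by
            rw [Finset.sum_comm]
            congr 1; funext s; congr 1; funext j; ring
    calc ∑ k ∈ Finset.range K, |Z (k + 1) p q| * (r ^ (N * ((k + 1) / N + 1)))⁻¹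
        ≤ ∑ k ∈ Finset.range K, ∑ s : Fin d, ∑ j ∈ Finset.range (k + 1),
            (|U (k - j) p s| * (r ^ (N * ((k - j) / N + 1)))⁻¹)
              * (|Z j s q| * (r ^ (N * (j / N + 1)))⁻¹) :=
          Finset.sum_le_sum (fun k _ => hterm k)
      _ = ∑ s : Fin d, ∑ k ∈ Finset.range K, ∑ j ∈ Finset.range (k + 1),
            (|U (k - j) p s| * (r ^ (N * ((k - j) / N + 1)))⁻¹)
              * (|Z j s q| * (r ^ (N * (j / N + 1)))⁻¹) := Finset.sum_comm
      _ ≤ ∑ s : Fin d, (∑' m, |U m p s| * (r ^ (N * (m / N + 1)))⁻¹)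
            * (∑ j ∈ Finset.range (K + 1), |Z j s q| * (r ^ (N * (j / N + 1)))⁻¹) := by
          apply Finset.sum_le_sum
          intro s _
          exact conv_bound K (fun m => |U m p s| * (r ^ (N * (m / N + 1)))⁻¹)
            (fun j => |Z j s q| * (r ^ (N * (j / N + 1)))⁻¹)
            (fun n => by positivity) (fun n => by positivity) (hUsum p s)


private lemma unif_bound (d : ℕ) (hd : 0 < d) (c : ℝ) (hc : 0 ≤ c)
    (T : Fin d → Fin d → ℝ) (hT0 : ∀ p s, 0 ≤ T p s)
    (hrow : ∀ p, ∑ s, T p s < 1)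
    (S : ℕ → Fin d → Fin d → ℝ) (hS0 : ∀ M p q, 0 ≤ S M p q)
    (hrec : ∀ M p q, S M p q
      ≤ c * (1 : Matrix (Fin d) (Fin d) ℝ) p q + ∑ s, T p s * S M s q) :
    ∃ C, ∀ M p q, S M p q ≤ C := by
  haveI : Nonempty (Fin d) := ⟨⟨0, hd⟩⟩
  set β := Finset.univ.sup' Finset.univ_nonempty (fun p : Fin d => ∑ s, T p s) with hβ
  have hβ1 : β < 1 := by
    rw [hβ, Finset.sup'_lt_iff]; intro p _; exact hrow p
  have hβle : ∀ p, ∑ s, T p s ≤ β := fun p => Finset.le_sup' (fun p : Fin d => ∑ s, T p s) (Finset.mem_univ p)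
  refine ⟨c / (1 - β), ?_⟩
  intro M p q
  obtain ⟨p0, _, hp0⟩ := Finset.exists_max_image Finset.univ (fun p => S M p q)
    Finset.univ_nonempty
  have key : S M p0 q ≤ c + β * S M p0 q := by
    calc S M p0 q ≤ c * (1 : Matrix (Fin d) (Fin d) ℝ) p0 q + ∑ s, T p0 s * S M s q :=
        hrec M p0 q
      _ ≤ c + ∑ s, T p0 s * S M p0 q := by
          apply add_le_add
          · rw [Matrix.one_apply]; split <;> simp [hc]
          · exact Finset.sum_le_sum fun s _ =>
              mul_le_mul_of_nonneg_left (hp0 s (Finset.mem_univ s)) (hT0 p0 s)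
      _ = c + (∑ s, T p0 s) * S M p0 q := by rw [Finset.sum_mul]
      _ ≤ c + β * S M p0 q := add_le_add_right
          (mul_le_mul_of_nonneg_right (hβle p0) (hS0 M p0 q)) c
  have h1β : 0 < 1 - β := by linarith
  have hfin : S M p0 q ≤ c / (1 - β) := by
    rw [le_div_iff₀ h1β]; nlinarith [key]
  exact le_trans (hp0 p (Finset.mem_univ p)) hfin

/-- Lemma 3.1 of the paper: summability of the resolvent `Z` of `U` and the
entrywise inequality `A ≤ r^{-N} I + B A`. -/
theorem stmt5 (d N : ℕ) (hd : 0 < d) (hN : 0 < N) (r : ℝ) (hr0 : 0 < r) (hr1 : r ≤ 1)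
    (U Z : ℕ → Matrix (Fin d) (Fin d) ℝ)
    (hZ0 : Z 0 = 1)
    (hZ : ∀ n, Z (n + 1) = ∑ j ∈ Finset.range (n + 1), U (n - j) * Z j)
    (hsum : ∀ (p q : Fin d) (i : ℕ), i < N →
      Summable (fun l : ℕ => |U (N * l + i) p q| / r ^ (N * (l + 1))))
    (hbound : ∀ p : Fin d,
      ∑ q : Fin d, ∑ i ∈ Finset.range N,
        ∑' l : ℕ, |U (N * l + i) p q| / r ^ (N * (l + 1)) < 1) :
    (∀ (p q : Fin d) (i : ℕ), i < N →
      Summable (fun n : ℕ => |Z (N * n + i) p q| / r ^ (N * (n + 1)))) ∧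
    ∀ p q : Fin d,
      (∑ i ∈ Finset.range N, ∑' n : ℕ, |Z (N * n + i) p q| / r ^ (N * (n + 1)))
        ≤ (r ^ N)⁻¹ * (1 : Matrix (Fin d) (Fin d) ℝ) p q
          + ∑ s : Fin d,
              (∑ i ∈ Finset.range N, ∑' n : ℕ, |U (N * n + i) p s| / r ^ (N * (n + 1)))
                * (∑ i ∈ Finset.range N, ∑' n : ℕ, |Z (N * n + i) s q| / r ^ (N * (n + 1))) := by
  -- slice conversion between the two forms of the weighted terms
  have hconv : ∀ (V : ℕ → Matrix (Fin d) (Fin d) ℝ) (p q : Fin d) (i : ℕ), i < N →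
      (fun l : ℕ => |V (N * l + i) p q| * (r ^ (N * ((N * l + i) / N + 1)))⁻¹)
        = fun l : ℕ => |V (N * l + i) p q| / r ^ (N * (l + 1)) := by
    intro V p q i hi
    funext l
    have hdiv : (N * l + i) / N = l := by
      rw [Nat.mul_add_div hN, Nat.div_eq_of_lt hi, add_zero]
    rw [hdiv, div_eq_mul_inv]
  have hw0 : ∀ m : ℕ, 0 ≤ (r ^ (N * (m / N + 1)))⁻¹ := fun m => by positivity
  -- summability and resummation for U
  have hUre : ∀ p s : Fin d,
      Summable (fun m => |U m p s| * (r ^ (N * (m / N + 1)))⁻¹) ∧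
      ∑' m, |U m p s| * (r ^ (N * (m / N + 1)))⁻¹
        = ∑ i ∈ Finset.range N, ∑' l : ℕ, |U (N * l + i) p s| / r ^ (N * (l + 1)) := by
    intro p s
    have := reindex_nat N hN (fun m => |U m p s| * (r ^ (N * (m / N + 1)))⁻¹)
      (fun m => by positivity)
      (fun i hi => by rw [hconv U p s i hi]; exact hsum p s i hi)
    refine ⟨this.1, ?_⟩
    rw [this.2]
    exact Finset.sum_congr rfl fun i hi => by rw [hconv U p s i (Finset.mem_range.mp hi)]
  have hUsum : ∀ p s : Fin d,
      Summable (fun m => |U m p s| * (r ^ (N * (m / N + 1)))⁻¹) := fun p s => (hUre p s).1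
  -- row sums of B are < 1
  have hrow : ∀ p : Fin d,
      ∑ s : Fin d, (∑' m, |U m p s| * (r ^ (N * (m / N + 1)))⁻¹) < 1 := by
    intro p
    have := hbound p
    calc ∑ s : Fin d, (∑' m, |U m p s| * (r ^ (N * (m / N + 1)))⁻¹)
        = ∑ s : Fin d, ∑ i ∈ Finset.range N,
            ∑' l : ℕ, |U (N * l + i) p s| / r ^ (N * (l + 1)) :=
          Finset.sum_congr rfl fun s _ => (hUre p s).2
      _ < 1 := this
  -- uniform bound on partial sums of the weighted resolvent
  obtain ⟨C, hC⟩ := unif_bound d hd ((r ^ N)⁻¹) (by positivity)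
    (fun p s => ∑' m, |U m p s| * (r ^ (N * (m / N + 1)))⁻¹)
    (fun p s => tsum_nonneg fun m => by positivity)
    hrow
    (fun M p q => ∑ m ∈ Finset.range M, |Z m p q| * (r ^ (N * (m / N + 1)))⁻¹)
    (fun M p q => Finset.sum_nonneg fun m _ => by positivity)
    (fun M p q => main_ineq d N hN r hr0 hr1 U Z hZ0 hZ hUsum M p q)
  have hZsum : ∀ p q : Fin d,
      Summable (fun m => |Z m p q| * (r ^ (N * (m / N + 1)))⁻¹) := by
    intro p q
    exact summable_of_sum_range_le (fun m => by positivity) (fun M => hC M p q)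
  have hinj : ∀ i : ℕ, Function.Injective (fun l : ℕ => N * l + i) := by
    intro i a b hab
    simp only at hab
    exact Nat.eq_of_mul_eq_mul_left hN (by omega)
  have hslice : ∀ (p q : Fin d) (i : ℕ), i < N →
      Summable (fun n : ℕ => |Z (N * n + i) p q| / r ^ (N * (n + 1))) := by
    intro p q i hi
    rw [← hconv Z p q i hi]
    exact (hZsum p q).comp_injective (hinj i)
  refine ⟨hslice, ?_⟩
  -- resummation for Z
  have hZre : ∀ p q : Fin d,
      ∑' m, |Z m p q| * (r ^ (N * (m / N + 1)))⁻¹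
        = ∑ i ∈ Finset.range N, ∑' l : ℕ, |Z (N * l + i) p q| / r ^ (N * (l + 1)) := by
    intro p q
    have := reindex_nat N hN (fun m => |Z m p q| * (r ^ (N * (m / N + 1)))⁻¹)
      (fun m => by positivity)
      (fun i hi => by rw [hconv Z p q i hi]; exact hslice p q i hi)
    rw [this.2]
    exact Finset.sum_congr rfl fun i hi => by rw [hconv Z p q i (Finset.mem_range.mp hi)]
  intro p q
  rw [← hZre p q]
  have hmain : ∑' m, |Z m p q| * (r ^ (N * (m / N + 1)))⁻¹
      ≤ (r ^ N)⁻¹ * (1 : Matrix (Fin d) (Fin d) ℝ) p q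
        + ∑ s : Fin d, (∑' m, |U m p s| * (r ^ (N * (m / N + 1)))⁻¹)
            * (∑' m, |Z m s q| * (r ^ (N * (m / N + 1)))⁻¹) := by
    apply Real.tsum_le_of_sum_range_le (fun m => by positivity)
    intro M
    calc ∑ m ∈ Finset.range M, |Z m p q| * (r ^ (N * (m / N + 1)))⁻¹
        ≤ (r ^ N)⁻¹ * (1 : Matrix (Fin d) (Fin d) ℝ) p q
          + ∑ s : Fin d, (∑' m, |U m p s| * (r ^ (N * (m / N + 1)))⁻¹)
              * (∑ j ∈ Finset.range M, |Z j s q| * (r ^ (N * (j / N + 1)))⁻¹) :=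
          main_ineq d N hN r hr0 hr1 U Z hZ0 hZ hUsum M p q
      _ ≤ (r ^ N)⁻¹ * (1 : Matrix (Fin d) (Fin d) ℝ) p q
          + ∑ s : Fin d, (∑' m, |U m p s| * (r ^ (N * (m / N + 1)))⁻¹)
              * (∑' m, |Z m s q| * (r ^ (N * (m / N + 1)))⁻¹) := by
          apply add_le_add_right
          apply Finset.sum_le_sum
          intro s _
          apply mul_le_mul_of_nonneg_left _ (tsum_nonneg fun m => by positivity)
          exact Summable.sum_le_tsum _ (fun m _ => by positivity) (hZsum s q)
  refine le_trans hmain ?_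
  apply add_le_add_right
  apply le_of_eq
  apply Finset.sum_congr rfl
  intro s _
  rw [(hUre p s).2, hZre s q]
end

section
/- Let U : ℕ → ℝ^{d×d}, let Z be its resolvent, let N be a positive integer and let 0 < r ≤ 1. Suppose all the series below converge and max_{1≤p≤d} ( Σ_{q=1}^d Σ_{i=0}^{N-1} Σ_{l=0}^∞ r^{-N(l+1)} |U(Nl+i)|_{p,q} ) < 1/(1 + r^{-N}). Then max_{1≤p≤d} ( Σ_{q=1}^d Σ_{i=0}^{N-1} Σ_{l=0}^∞ r^{-N(l+1)} |Z(Nl+i+1)|_{p,q} ) < 1. -/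
open Finset

private lemma aux_swap (M : ℕ) (h : ℕ → ℕ → ℝ) (h0 : ∀ a j, 0 ≤ h a j) :
    ∑ n ∈ Finset.range M, ∑ j ∈ Finset.range n, h (n - 1 - j) j ≤
      ∑ j ∈ Finset.range M, ∑ a ∈ Finset.range M, h a j := by
  rw [Finset.sum_comm' (t' := Finset.range M) (s' := fun j => Finset.Ico (j + 1) M)
      (by intro n j; simp only [Finset.mem_range, Finset.mem_Ico]; omega)]
  refine Finset.sum_le_sum fun j hj => ?_
  rw [Finset.sum_Ico_eq_sum_range]
  calc ∑ a ∈ Finset.range (M - (j + 1)), h (j + 1 + a - 1 - j) j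
      = ∑ a ∈ Finset.range (M - (j + 1)), h a j :=
        Finset.sum_congr rfl fun a _ => by congr 1; omega
    _ ≤ ∑ a ∈ Finset.range M, h a j :=
        Finset.sum_le_sum_of_subset_of_nonneg
          (Finset.range_subset_range.mpr (by omega)) (fun a _ _ => h0 a j)

private lemma aux_decomp (N : ℕ) (hN : 0 < N) (f : ℕ → ℝ) (h0 : ∀ m, 0 ≤ f m)
    (hf : ∀ i, i < N → Summable (fun l => f (N * l + i))) :
    Summable f ∧ ∑' m, f m = ∑ i ∈ Finset.range N, ∑' l, f (N * l + i) := by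
  haveI : NeZero N := ⟨hN.ne'⟩
  set g : ℕ × Fin N → ℝ := fun x => f (N * x.1 + (x.2 : ℕ)) with hg
  have hfib : ∀ i : Fin N, Summable (fun l => g (l, i)) := fun i => hf i i.isLt
  have hgsum : Summable g := by
    rw [summable_prod_of_nonneg (fun x => h0 _)]
    refine ⟨fun l => Summable.of_finite, ?_⟩
    have he : (fun l => ∑' i : Fin N, g (l, i)) = fun l => ∑ i : Fin N, g (l, i) := by
      funext l; exact tsum_fintype _
    rw [he]
    exact summable_sum fun i _ => hfib i
  have hfg : ∀ m, f m = g ((Nat.divModEquiv N) m) := by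
    intro m
    simp only [hg, Nat.divModEquiv, Equiv.coe_fn_mk, Fin.val_natCast, Fin.val_ofNat]
    rw [Nat.div_add_mod]
  have hfeq : f = g ∘ (Nat.divModEquiv N) := funext hfg
  have hsf : Summable f := by
    rw [hfeq]; exact ((Nat.divModEquiv N).summable_iff).mpr hgsum
  refine ⟨hsf, ?_⟩
  have h1 : ∑' m, f m = ∑' x, g x := by
    rw [hfeq]; exact (Nat.divModEquiv N).tsum_eq g
  have h2 : ∑' x : ℕ × Fin N, g x = ∑' l, ∑ i : Fin N, g (l, i) := by
    rw [Summable.tsum_prod' hgsum (fun l => Summable.of_finite)]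
    congr 1; funext l; exact tsum_fintype _
  have h3 : ∑' l, ∑ i : Fin N, g (l, i) = ∑ i : Fin N, ∑' l, g (l, i) :=
    Summable.tsum_finsetSum fun i _ => hfib i
  have h4 : ∑ i : Fin N, ∑' l, g (l, i) = ∑ i ∈ Finset.range N, ∑' l, f (N * l + i) := by
    rw [← Fin.sum_univ_eq_sum_range (fun i => ∑' l, f (N * l + i)) N]
  rw [h1, h2, h3, h4]

/-- If `U` satisfies the stronger smallness condition with bound `1/(1 + r^{-N})`,
then the shifted resolvent satisfies the weighted norm bound `< 1`. -/
theorem stmt10 (d N : ℕ) (hd : 0 < d) (hN : 0 < N) (r : ℝ) (hr0 : 0 < r) (hr1 : r ≤ 1)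
    (U Z : ℕ → Matrix (Fin d) (Fin d) ℝ)
    (hZ0 : Z 0 = 1)
    (hZ : ∀ n, Z (n + 1) = ∑ j ∈ Finset.range (n + 1), U (n - j) * Z j)
    (hsum : ∀ (p q : Fin d) (i : ℕ), i < N →
      Summable (fun l : ℕ => |U (N * l + i) p q| / r ^ (N * (l + 1))))
    (hbound : ∀ p : Fin d,
      ∑ q : Fin d, ∑ i ∈ Finset.range N,
        ∑' l : ℕ, |U (N * l + i) p q| / r ^ (N * (l + 1)) < 1 / (1 + (r ^ N)⁻¹)) :
    (∀ (p q : Fin d) (i : ℕ), i < N →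
      Summable (fun l : ℕ => |Z (N * l + i + 1) p q| / r ^ (N * (l + 1)))) ∧
    ∀ p : Fin d,
      ∑ q : Fin d, ∑ i ∈ Finset.range N,
        ∑' l : ℕ, |Z (N * l + i + 1) p q| / r ^ (N * (l + 1)) < 1 := by
  haveI hdne : Nonempty (Fin d) := ⟨⟨0, hd⟩⟩
  have hrN : 0 < r ^ N := pow_pos hr0 N
  set t : ℝ := (r ^ N)⁻¹ with ht_def
  have ht0 : 0 < t := inv_pos.mpr hrN
  have ht1 : 1 ≤ t := (one_le_inv₀ hrN).mpr (pow_le_one₀ hr0.le hr1)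
  set w : ℕ → ℝ := fun m => (r ^ (N * (m / N + 1)))⁻¹ with hw_def
  have hw_eq : ∀ m, w m = t ^ (m / N + 1) := by
    intro m; simp only [hw_def, ht_def]; rw [pow_mul, ← inv_pow]
  have hw0 : ∀ m, 0 < w m := fun m => by rw [hw_eq]; positivity
  have hdivkey : ∀ n j : ℕ, j < n → n / N + 1 ≤ (n - 1 - j) / N + j / N + 3 := by
    intro n j hjn
    have h1 : n / N ≤ (n - 1) / N + 1 := by
      calc n / N ≤ (n - 1 + N) / N := Nat.div_le_div_right (by omega)
        _ = (n - 1) / N + 1 := Nat.add_div_right _ hN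
    have h2 : (n - 1) / N = (n - 1 - j + j) / N := by congr 1; omega
    have h3 : (n - 1 - j + j) / N ≤ (n - 1 - j) / N + j / N + 1 := by
      rw [Nat.add_div hN]; split <;> omega
    omega
  have hwkey : ∀ n j : ℕ, j < n → w n ≤ t * (w (n - 1 - j) * w j) := by
    intro n j hjn
    rw [hw_eq, hw_eq, hw_eq]
    calc t ^ (n / N + 1) ≤ t ^ ((n - 1 - j) / N + j / N + 3) :=
          pow_le_pow_right₀ ht1 (hdivkey n j hjn)
      _ = t * (t ^ ((n - 1 - j) / N + 1) * t ^ (j / N + 1)) := by ring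
  set G : Fin d → Fin d → ℕ → ℝ := fun p k m => w m * |U m p k| with hGdef
  set F : Fin d → Fin d → ℕ → ℝ := fun p q m => w m * |Z (m + 1) p q| with hFdef
  have hG0 : ∀ p k m, 0 ≤ G p k m := fun p k m => mul_nonneg (hw0 m).le (abs_nonneg _)
  have hF0 : ∀ p q m, 0 ≤ F p q m := fun p q m => mul_nonneg (hw0 m).le (abs_nonneg _)
  have hdiv : ∀ i l : ℕ, i < N → (N * l + i) / N = l := by
    intro i l hi
    rw [Nat.mul_add_div hN, Nat.div_eq_of_lt hi, add_zero]
  have hGfib : ∀ p k i, i < N → (fun l => G p k (N * l + i)) =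
      fun l => |U (N * l + i) p k| / r ^ (N * (l + 1)) := by
    intro p k i hi; funext l
    simp only [hGdef, hw_def, hdiv i l hi]
    ring
  have hFfib : ∀ p q i, i < N → (fun l => F p q (N * l + i)) =
      fun l => |Z (N * l + i + 1) p q| / r ^ (N * (l + 1)) := by
    intro p q i hi; funext l
    simp only [hFdef, hw_def, hdiv i l hi]
    ring
  have hGsum : ∀ p k, Summable (G p k) ∧
      ∑' m, G p k m = ∑ i ∈ Finset.range N, ∑' l, G p k (N * l + i) :=
    fun p k => aux_decomp N hN _ (hG0 p k)
      (fun i hi => by rw [hGfib p k i hi]; exact hsum p k i hi)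
  set a : Fin d → Fin d → ℝ := fun p k => ∑' m, G p k m with hadef
  have ha0 : ∀ p k, 0 ≤ a p k := fun p k => tsum_nonneg (hG0 p k)
  have haG : ∀ p k (s : Finset ℕ), ∑ m ∈ s, G p k m ≤ a p k :=
    fun p k s => Summable.sum_le_tsum s (fun m _ => hG0 p k m) (hGsum p k).1
  set A : Fin d → ℝ := fun p => ∑ k, a p k with hAdef
  have hA0 : ∀ p, 0 ≤ A p := fun p => Finset.sum_nonneg fun k _ => ha0 p k
  have hA : ∀ p, A p < 1 / (1 + t) := by
    intro p
    calc A p = ∑ k, ∑ i ∈ Finset.range N, ∑' l, |U (N * l + i) p k| / r ^ (N * (l + 1)) := by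
          simp only [hAdef]
          refine Finset.sum_congr rfl fun k _ => ?_
          simp only [hadef]
          rw [(hGsum p k).2]
          exact Finset.sum_congr rfl fun i hi => by rw [hGfib p k i (Finset.mem_range.mp hi)]
      _ < 1 / (1 + t) := hbound p
  set Am : ℝ := Finset.univ.sup' Finset.univ_nonempty A with hAmdef
  have hAmle : ∀ p, A p ≤ Am := fun p => Finset.le_sup' A (Finset.mem_univ p)
  have hAmlt : Am < 1 / (1 + t) := by
    rw [hAmdef, Finset.sup'_lt_iff]; exact fun p _ => hA p
  have hAm0 : 0 ≤ Am := le_trans (hA0 (Classical.arbitrary _)) (hAmle _)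
  set P : Fin d → ℕ → ℝ := fun p M => ∑ m ∈ Finset.range M, ∑ q, F p q m with hPdef
  have hP0 : ∀ p M, 0 ≤ P p M :=
    fun p M => Finset.sum_nonneg fun m _ => Finset.sum_nonneg fun q _ => hF0 p q m
  set T : ℕ → ℝ := fun M => Finset.univ.sup' Finset.univ_nonempty (fun p => P p M) with hTdef
  have hPT : ∀ p M, P p M ≤ T M := fun p M => Finset.le_sup' (fun p => P p M) (Finset.mem_univ p)
  have hT0 : ∀ M, 0 ≤ T M := fun M => le_trans (hP0 (Classical.arbitrary _) M) (hPT _ M)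
  -- pointwise bound on |Z (n+1) p q|
  have hZb : ∀ n (p q : Fin d), |Z (n + 1) p q| ≤
      |U n p q| + ∑ j ∈ Finset.range n, ∑ k, |U (n - 1 - j) p k| * |Z (j + 1) k q| := by
    intro n p q
    have e1 : Z (n + 1) p q = ∑ j ∈ Finset.range (n + 1), ∑ k, U (n - j) p k * Z j k q := by
      rw [hZ n]; simp [Matrix.sum_apply, Matrix.mul_apply]
    rw [e1, Finset.sum_range_succ']
    have e2 : ∑ k, U (n - 0) p k * Z 0 k q = U n p q := by
      rw [hZ0]; simp [Matrix.one_apply]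
    rw [e2]
    refine (abs_add_le _ _).trans ?_
    rw [add_comm]
    refine add_le_add_right ?_ _
    refine (Finset.abs_sum_le_sum_abs _ _).trans ?_
    refine Finset.sum_le_sum fun j hj => ?_
    refine (Finset.abs_sum_le_sum_abs _ _).trans ?_
    refine le_of_eq (Finset.sum_congr rfl fun k _ => ?_)
    rw [show n - (j + 1) = n - 1 - j by omega, abs_mul]
  -- the key recursive inequality
  have hPbound : ∀ M p, P p M ≤ A p + t * (A p * T M) := by
    intro M p
    have step1 : P p M ≤ (∑ n ∈ Finset.range M, ∑ q, G p q n) +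
        ∑ n ∈ Finset.range M, ∑ q, ∑ j ∈ Finset.range n, ∑ k,
          t * (G p k (n - 1 - j) * F k q j) := by
      simp only [hPdef]
      rw [← Finset.sum_add_distrib]
      refine Finset.sum_le_sum fun n _ => ?_
      rw [← Finset.sum_add_distrib]
      refine Finset.sum_le_sum fun q _ => ?_
      simp only [hFdef, hGdef]
      calc w n * |Z (n + 1) p q|
          ≤ w n * (|U n p q| + ∑ j ∈ Finset.range n, ∑ k,
              |U (n - 1 - j) p k| * |Z (j + 1) k q|) :=
            mul_le_mul_of_nonneg_left (hZb n p q) (hw0 n).le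
        _ = w n * |U n p q| + ∑ j ∈ Finset.range n, ∑ k,
              w n * (|U (n - 1 - j) p k| * |Z (j + 1) k q|) := by
            rw [mul_add, Finset.mul_sum]
            congr 1
            exact Finset.sum_congr rfl fun j _ => by rw [Finset.mul_sum]
        _ ≤ w n * |U n p q| + ∑ j ∈ Finset.range n, ∑ k,
              t * (w (n - 1 - j) * |U (n - 1 - j) p k| * (w j * |Z (j + 1) k q|)) := by
            refine add_le_add_right ?_ _
            refine Finset.sum_le_sum fun j hj => Finset.sum_le_sum fun k _ => ?_
            calc w n * (|U (n - 1 - j) p k| * |Z (j + 1) k q|)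
                ≤ (t * (w (n - 1 - j) * w j)) * (|U (n - 1 - j) p k| * |Z (j + 1) k q|) :=
                  mul_le_mul_of_nonneg_right (hwkey n j (Finset.mem_range.mp hj))
                    (mul_nonneg (abs_nonneg _) (abs_nonneg _))
              _ = t * (w (n - 1 - j) * |U (n - 1 - j) p k| * (w j * |Z (j + 1) k q|)) := by
                  ring
    have term1 : ∑ n ∈ Finset.range M, ∑ q, G p q n ≤ A p := by
      rw [Finset.sum_comm]
      simp only [hAdef]
      exact Finset.sum_le_sum fun q _ => haG p q _
    have term2 : ∑ n ∈ Finset.range M, ∑ q, ∑ j ∈ Finset.range n, ∑ k,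
        t * (G p k (n - 1 - j) * F k q j) ≤ t * (A p * T M) := by
      have hre : ∀ n, (∑ q, ∑ j ∈ Finset.range n, ∑ k, t * (G p k (n - 1 - j) * F k q j)) =
          t * ∑ j ∈ Finset.range n, ∑ k, G p k (n - 1 - j) * ∑ q, F k q j := by
        intro n
        rw [Finset.sum_comm, Finset.mul_sum]
        refine Finset.sum_congr rfl fun j _ => ?_
        rw [Finset.sum_comm, Finset.mul_sum]
        refine Finset.sum_congr rfl fun k _ => ?_
        rw [Finset.mul_sum, Finset.mul_sum]
      calc ∑ n ∈ Finset.range M, ∑ q, ∑ j ∈ Finset.range n, ∑ k,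
            t * (G p k (n - 1 - j) * F k q j)
          = t * ∑ n ∈ Finset.range M, ∑ j ∈ Finset.range n,
              ∑ k, G p k (n - 1 - j) * ∑ q, F k q j := by
            rw [Finset.mul_sum]
            exact Finset.sum_congr rfl fun n _ => hre n
        _ ≤ t * ∑ j ∈ Finset.range M, ∑ b ∈ Finset.range M,
              ∑ k, G p k b * ∑ q, F k q j := by
            refine mul_le_mul_of_nonneg_left ?_ ht0.le
            exact aux_swap M (fun b j => ∑ k, G p k b * ∑ q, F k q j)
              (fun b j => Finset.sum_nonneg fun k _ => mul_nonneg (hG0 p k b)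
                (Finset.sum_nonneg fun q _ => hF0 k q j))
        _ = t * ∑ k, (∑ b ∈ Finset.range M, G p k b) * P k M := by
            congr 1
            calc ∑ j ∈ Finset.range M, ∑ b ∈ Finset.range M, ∑ k, G p k b * ∑ q, F k q j
                = ∑ j ∈ Finset.range M, ∑ k, ∑ b ∈ Finset.range M, G p k b * ∑ q, F k q j :=
                  Finset.sum_congr rfl fun j _ => Finset.sum_comm
              _ = ∑ k, ∑ j ∈ Finset.range M, ∑ b ∈ Finset.range M, G p k b * ∑ q, F k q j :=
                  Finset.sum_comm
              _ = ∑ k, (∑ b ∈ Finset.range M, G p k b) * P k M := by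
                  refine Finset.sum_congr rfl fun k _ => ?_
                  simp only [hPdef]
                  rw [Finset.sum_comm, Finset.sum_mul]
                  refine Finset.sum_congr rfl fun b _ => ?_
                  rw [Finset.mul_sum]
        _ ≤ t * (A p * T M) := by
            refine mul_le_mul_of_nonneg_left ?_ ht0.le
            simp only [hAdef]
            rw [Finset.sum_mul]
            refine Finset.sum_le_sum fun k _ => ?_
            exact mul_le_mul (haG p k _) (hPT k M) (hP0 k M) (ha0 p k)
    calc P p M ≤ (∑ n ∈ Finset.range M, ∑ q, G p q n) +
        ∑ n ∈ Finset.range M, ∑ q, ∑ j ∈ Finset.range n, ∑ k,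
          t * (G p k (n - 1 - j) * F k q j) := step1
      _ ≤ A p + t * (A p * T M) := add_le_add term1 term2
  have hTrec : ∀ M, T M ≤ Am + t * (Am * T M) := by
    intro M
    refine Finset.sup'_le _ _ fun p _ => ?_
    have h := hPbound M p
    nlinarith [hAmle p, hT0 M, ht0, hA0 p,
      mul_nonneg (mul_nonneg (sub_nonneg.mpr (hAmle p)) ht0.le) (hT0 M)]
  have h1t : (0:ℝ) < 1 + t := by linarith
  have hAm1 : Am * (1 + t) < 1 := (lt_div_iff₀ h1t).mp hAmlt
  have hden : 0 < 1 - t * Am := by nlinarith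
  have hTle : ∀ M, T M ≤ Am / (1 - t * Am) := by
    intro M
    rw [le_div_iff₀ hden]
    nlinarith [hTrec M]
  have hC1 : Am / (1 - t * Am) < 1 := by
    rw [div_lt_one hden]; nlinarith
  have hPC : ∀ p M, P p M ≤ Am / (1 - t * Am) := fun p M => (hPT p M).trans (hTle M)
  have hFsum : ∀ p q, Summable (F p q) := by
    intro p q
    refine summable_of_sum_range_le (c := Am / (1 - t * Am)) (hF0 p q) (fun M => ?_)
    calc ∑ m ∈ Finset.range M, F p q m
        ≤ P p M := by
          simp only [hPdef]
          exact Finset.sum_le_sum fun m _ =>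
            Finset.single_le_sum (f := fun q' => F p q' m) (fun q' _ => hF0 p q' m)
              (Finset.mem_univ q)
      _ ≤ Am / (1 - t * Am) := hPC p M
  have hinj : ∀ i : ℕ, Function.Injective (fun l : ℕ => N * l + i) := by
    intro i l1 l2 h
    simp only [] at h
    have h2 := Nat.add_right_cancel h
    exact Nat.eq_of_mul_eq_mul_left hN h2
  have hZfibsum : ∀ (p q : Fin d) (i : ℕ), i < N →
      Summable (fun l : ℕ => |Z (N * l + i + 1) p q| / r ^ (N * (l + 1))) := by
    intro p q i hi
    rw [← hFfib p q i hi]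
    exact (hFsum p q).comp_injective (hinj i)
  refine ⟨hZfibsum, fun p => ?_⟩
  have hdec : ∀ q : Fin d, Summable (F p q) ∧
      ∑' m, F p q m = ∑ i ∈ Finset.range N, ∑' l, F p q (N * l + i) :=
    fun q => aux_decomp N hN _ (hF0 p q)
      (fun i hi => by rw [hFfib p q i hi]; exact hZfibsum p q i hi)
  calc ∑ q, ∑ i ∈ Finset.range N, ∑' l, |Z (N * l + i + 1) p q| / r ^ (N * (l + 1))
      = ∑ q, ∑' m, F p q m := by
        refine Finset.sum_congr rfl fun q _ => ?_
        rw [(hdec q).2]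
        exact (Finset.sum_congr rfl fun i hi => by
          rw [hFfib p q i (Finset.mem_range.mp hi)]).symm
    _ = ∑' m, ∑ q, F p q m := (Summable.tsum_finsetSum fun q _ => (hdec q).1).symm
    _ ≤ Am / (1 - t * Am) := Real.tsum_le_of_sum_range_le
        (fun m => Finset.sum_nonneg fun q _ => hF0 p q m)
        (fun M => by simpa only [hPdef] using hPC p M)
    _ < 1 := hC1
end

section
/- Let λ₁ > 0, let b : {1,2,…} → [0,∞), and let δ : ℕ → ℝ satisfy δ(0) = 1 and δ(n) = λ₁ Σ_{j=0}^{n−1} b(n−j) δ(j) for n ≥ 1. Define S_i := λ₁ Σ_{j=0}^∞ b(2j+i+1) for i ∈ {0,1} and assume S₀ + S₁ < 1. Then δ is nonnegative and summable, and Σ_{j=0}^∞ δ(2j) = (1−S₁)/((1−S₁)² − S₀²) and Σ_{j=0}^∞ δ(2j+1) = S₀/((1−S₁)² − S₀²). -/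
open Finset

/-- Triangle sum swap. -/
private lemma tri_swap (f : ℕ → ℕ → ℝ) (N : ℕ) :
    ∑ n ∈ range N, ∑ m ∈ range (n + 1), f n m
      = ∑ m ∈ range N, ∑ n ∈ Finset.Ico m N, f n m := by
  induction N with
  | zero => simp
  | succ N ih =>
    have hR : ∑ m ∈ range (N + 1), ∑ n ∈ Finset.Ico m (N + 1), f n m
        = (∑ m ∈ range N, ((∑ n ∈ Finset.Ico m N, f n m) + f N m)) + f N N := by
      rw [Finset.sum_range_succ]
      congr 1
      · exact Finset.sum_congr rfl fun m hm =>
          Finset.sum_Ico_succ_top (Finset.mem_range.mp hm).le _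
      · simp
    rw [Finset.sum_range_succ, ih, hR, Finset.sum_add_distrib, Finset.sum_range_succ]
    ring

/-- Even/odd split of a sum over `range (2*n)`. -/
private lemma even_odd_split (f : ℕ → ℝ) (n : ℕ) :
    ∑ i ∈ range (2 * n), f i
      = (∑ k ∈ range n, f (2 * k)) + ∑ k ∈ range n, f (2 * k + 1) := by
  induction n with
  | zero => simp
  | succ n ih =>
    have h2 : 2 * (n + 1) = 2 * n + 1 + 1 := by ring
    rw [h2, Finset.sum_range_succ, Finset.sum_range_succ, ih,
      Finset.sum_range_succ, Finset.sum_range_succ]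
    have e1 : 2 * n + 1 = 2 * n + 1 := rfl
    ring

/-- Even/odd split of a sum over `range (2*n+1)`. -/
private lemma even_odd_split' (f : ℕ → ℝ) (n : ℕ) :
    ∑ i ∈ range (2 * n + 1), f i
      = (∑ k ∈ range (n + 1), f (2 * k)) + ∑ k ∈ range n, f (2 * k + 1) := by
  rw [Finset.sum_range_succ, even_odd_split, Finset.sum_range_succ]
  ring

/-- Summability of the ARCH(∞) resolvent `δ` and the closed forms of the sums of
its even and odd subsequences. -/
theorem stmt13 (lam : ℝ) (hlam : 0 < lam)
    (b : ℕ → ℝ) (hb : ∀ j, 1 ≤ j → 0 ≤ b j)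
    (δ : ℕ → ℝ) (hδ0 : δ 0 = 1)
    (hδ : ∀ n, 1 ≤ n → δ n = lam * ∑ j ∈ Finset.range n, b (n - j) * δ j)
    (hb0 : Summable (fun j : ℕ => b (2 * j + 1)))
    (hb1 : Summable (fun j : ℕ => b (2 * j + 2)))
    (S₀ S₁ : ℝ)
    (hS₀ : S₀ = lam * ∑' j : ℕ, b (2 * j + 1))
    (hS₁ : S₁ = lam * ∑' j : ℕ, b (2 * j + 2))
    (hS : S₀ + S₁ < 1) :
    (∀ n, 0 ≤ δ n) ∧ Summable δ ∧
    (∑' j : ℕ, δ (2 * j)) = (1 - S₁) / ((1 - S₁) ^ 2 - S₀ ^ 2) ∧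
    (∑' j : ℕ, δ (2 * j + 1)) = S₀ / ((1 - S₁) ^ 2 - S₀ ^ 2) := by
  -- nonnegativity of δ
  have hpos : ∀ n, 0 ≤ δ n := by
    intro n
    induction n using Nat.strong_induction_on with
    | _ n ih =>
      match n with
      | 0 => rw [hδ0]; norm_num
      | (m + 1) =>
        rw [hδ (m + 1) (by omega)]
        refine mul_nonneg hlam.le (Finset.sum_nonneg fun j hj => ?_)
        have hj' : j < m + 1 := Finset.mem_range.mp hj
        exact mul_nonneg (hb _ (by omega)) (ih j hj')
  -- summability of shifted b
  have hodd_eq : (fun k : ℕ => b (2 * k + 1 + 1)) = fun k : ℕ => b (2 * k + 2) := by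
    funext k; congr 1
  have hb1' : Summable (fun k : ℕ => b (2 * k + 1 + 1)) := by
    rw [hodd_eq]; exact hb1
  have hbsum : Summable (fun m : ℕ => b (m + 1)) := Summable.even_add_odd hb0 hb1'
  -- nonnegativity of S₀ and S₁
  have hS₀nn : 0 ≤ S₀ := by
    rw [hS₀]
    exact mul_nonneg hlam.le (tsum_nonneg fun j => hb _ (by omega))
  have hS₁nn : 0 ≤ S₁ := by
    rw [hS₁]
    exact mul_nonneg hlam.le (tsum_nonneg fun j => hb _ (by omega))
  -- the total sum of lam * b (m+1)
  have hsplit_tsum : (∑' k : ℕ, b (2 * k + 1)) + (∑' k : ℕ, b (2 * k + 2))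
      = ∑' m : ℕ, b (m + 1) := by
    have h := tsum_even_add_odd (f := fun m : ℕ => b (m + 1)) hb0 hb1'
    rw [hodd_eq] at h
    exact h
  have htot : lam * ∑' m : ℕ, b (m + 1) = S₀ + S₁ := by
    rw [hS₀, hS₁, ← hsplit_tsum]; ring
  have hatot : ∀ N : ℕ, ∑ m ∈ range N, lam * b (m + 1) ≤ S₀ + S₁ := by
    intro N
    rw [← htot, ← Finset.mul_sum]
    refine mul_le_mul_of_nonneg_left ?_ hlam.le
    exact Summable.sum_le_tsum (range N) (fun m _ => hb _ (by omega)) hbsum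
  -- partial sums of δ
  have hPmono : ∀ {M N : ℕ}, M ≤ N →
      (∑ i ∈ range M, δ i) ≤ ∑ i ∈ range N, δ i := fun h =>
    Finset.sum_le_sum_of_subset_of_nonneg (Finset.range_subset_range.mpr h)
      fun i _ _ => hpos i
  have hPnn : ∀ N, 0 ≤ ∑ i ∈ range N, δ i :=
    fun N => Finset.sum_nonneg fun i _ => hpos i
  -- reflection of the convolution
  have hreflect : ∀ n : ℕ, δ (n + 1)
      = ∑ m ∈ range (n + 1), lam * b (m + 1) * δ (n - m) := by
    intro n
    rw [hδ (n + 1) (by omega), Finset.mul_sum]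
    rw [← Finset.sum_range_reflect (fun m => lam * b (m + 1) * δ (n - m)) (n + 1)]
    refine Finset.sum_congr rfl fun j hj => ?_
    have hj' : j < n + 1 := Finset.mem_range.mp hj
    have h1 : n + 1 - 1 - j + 1 = n + 1 - j := by omega
    have h2 : n - (n + 1 - 1 - j) = j := by omega
    rw [h1, h2]; ring
  -- key self-bounding inequality
  have hkey : ∀ N : ℕ, (∑ n ∈ range N, δ n)
      ≤ 1 + (S₀ + S₁) * ∑ n ∈ range N, δ n := by
    intro N
    match N with
    | 0 =>
      simp only [Finset.range_zero, Finset.sum_empty, mul_zero]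
      norm_num
    | (M + 1) =>
      have hsplit : (∑ n ∈ range (M + 1), δ n) = 1 + ∑ n ∈ range M, δ (n + 1) := by
        rw [Finset.sum_range_succ' δ M, hδ0]
        ring
      have hswap : ∑ n ∈ range M, δ (n + 1)
          = ∑ m ∈ range M, ∑ n ∈ Finset.Ico m M, lam * b (m + 1) * δ (n - m) := by
        rw [← tri_swap (fun n m => lam * b (m + 1) * δ (n - m)) M]
        exact Finset.sum_congr rfl fun n _ => hreflect n
      have hinner : ∀ m ∈ range M,
          (∑ n ∈ Finset.Ico m M, lam * b (m + 1) * δ (n - m))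
            ≤ lam * b (m + 1) * ∑ n ∈ range (M + 1), δ n := by
        intro m hm
        rw [Finset.sum_Ico_eq_sum_range]
        have he : ∀ i ∈ range (M - m), lam * b (m + 1) * δ (m + i - m)
            = lam * b (m + 1) * δ i := by
          intro i _; congr 2; omega
        rw [Finset.sum_congr rfl he, ← Finset.mul_sum]
        exact mul_le_mul_of_nonneg_left (hPmono (by omega))
          (mul_nonneg hlam.le (hb _ (by omega)))
      calc (∑ n ∈ range (M + 1), δ n)
          = 1 + ∑ n ∈ range M, δ (n + 1) := hsplit
        _ = 1 + ∑ m ∈ range M, ∑ n ∈ Finset.Ico m M, lam * b (m + 1) * δ (n - m) := by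
            rw [hswap]
        _ ≤ 1 + ∑ m ∈ range M, lam * b (m + 1) * ∑ n ∈ range (M + 1), δ n :=
            add_le_add_right (Finset.sum_le_sum hinner) 1
        _ = 1 + (∑ m ∈ range M, lam * b (m + 1)) * ∑ n ∈ range (M + 1), δ n := by
            rw [Finset.sum_mul]
        _ ≤ 1 + (S₀ + S₁) * ∑ n ∈ range (M + 1), δ n :=
            add_le_add_right (mul_le_mul_of_nonneg_right (hatot M) (hPnn _)) 1
  have h1S : 0 < 1 - (S₀ + S₁) := by linarith
  have hbound : ∀ N : ℕ, (∑ n ∈ range N, δ n) ≤ 1 / (1 - (S₀ + S₁)) := by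
    intro N
    rw [le_div_iff₀ h1S]
    have := hkey N
    nlinarith
  have hsummable : Summable δ := summable_of_sum_range_le hpos hbound
  -- summability of even and odd subsequences
  have hinj2 : Function.Injective (fun j : ℕ => 2 * j) :=
    mul_right_injective₀ two_ne_zero
  have hse : Summable (fun j : ℕ => δ (2 * j)) :=
    hsummable.comp_injective hinj2
  have hso : Summable (fun j : ℕ => δ (2 * j + 1)) := by
    have hinj : Function.Injective (fun j : ℕ => 2 * j + 1) := by
      intro a c h
      simp only at h
      omega
    exact hsummable.comp_injective hinj
  set E := ∑' j : ℕ, δ (2 * j) with hE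
  set O := ∑' j : ℕ, δ (2 * j + 1) with hO
  -- norm-summability helpers
  have hnorm : ∀ (f : ℕ → ℝ), (∀ n, 0 ≤ f n) → Summable f
      → Summable (fun n => ‖f n‖) := by
    intro f hf hsf
    refine hsf.congr fun n => ?_
    exact (Real.norm_of_nonneg (hf n)).symm
  have hg₁ : Summable (fun m : ℕ => lam * b (2 * m + 2)) := hb1.mul_left lam
  have hg₀ : Summable (fun m : ℕ => lam * b (2 * m + 1)) := hb0.mul_left lam
  have hg₁n : Summable (fun m : ℕ => ‖lam * b (2 * m + 2)‖) :=
    hnorm _ (fun m => mul_nonneg hlam.le (hb _ (by omega))) hg₁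
  have hg₀n : Summable (fun m : ℕ => ‖lam * b (2 * m + 1)‖) :=
    hnorm _ (fun m => mul_nonneg hlam.le (hb _ (by omega))) hg₀
  have hsen : Summable (fun j : ℕ => ‖δ (2 * j)‖) := hnorm _ (fun j => hpos _) hse
  have hson : Summable (fun j : ℕ => ‖δ (2 * j + 1)‖) := hnorm _ (fun j => hpos _) hso
  have htg₁ : (∑' m : ℕ, lam * b (2 * m + 2)) = S₁ := by
    rw [tsum_mul_left, hS₁]
  have htg₀ : (∑' m : ℕ, lam * b (2 * m + 1)) = S₀ := by
    rw [tsum_mul_left, hS₀]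
  -- Cauchy products
  have hA : HasSum
      (fun n : ℕ => ∑ k ∈ range (n + 1), δ (2 * k) * (lam * b (2 * (n - k) + 2)))
      (E * S₁) := by
    have h := hasSum_sum_range_mul_of_summable_norm
      (f := fun j : ℕ => δ (2 * j)) (g := fun m : ℕ => lam * b (2 * m + 2)) hsen hg₁n
    rwa [htg₁, ← hE] at h
  have hB : HasSum
      (fun n : ℕ => ∑ k ∈ range (n + 1), δ (2 * k + 1) * (lam * b (2 * (n - k) + 1)))
      (O * S₀) := by
    have h := hasSum_sum_range_mul_of_summable_norm
      (f := fun j : ℕ => δ (2 * j + 1)) (g := fun m : ℕ => lam * b (2 * m + 1)) hson hg₀n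
    rwa [htg₀, ← hO] at h
  have hA' : HasSum
      (fun n : ℕ => ∑ k ∈ range (n + 1), δ (2 * k) * (lam * b (2 * (n - k) + 1)))
      (E * S₀) := by
    have h := hasSum_sum_range_mul_of_summable_norm
      (f := fun j : ℕ => δ (2 * j)) (g := fun m : ℕ => lam * b (2 * m + 1)) hsen hg₀n
    rwa [htg₀, ← hE] at h
  have hB' : HasSum
      (fun n : ℕ => ∑ k ∈ range (n + 1), δ (2 * k + 1) * (lam * b (2 * (n - k) + 2)))
      (O * S₁) := by
    have h := hasSum_sum_range_mul_of_summable_norm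
      (f := fun j : ℕ => δ (2 * j + 1)) (g := fun m : ℕ => lam * b (2 * m + 2)) hson hg₁n
    rwa [htg₁, ← hO] at h
  -- even recursion: δ(2j+2) = A j + B j
  have heven : ∀ j : ℕ, δ (2 * j + 2)
      = (∑ k ∈ range (j + 1), δ (2 * k) * (lam * b (2 * (j - k) + 2)))
        + ∑ k ∈ range (j + 1), δ (2 * k + 1) * (lam * b (2 * (j - k) + 1)) := by
    intro j
    have h2 : 2 * j + 2 = 2 * (j + 1) := by ring
    rw [hδ (2 * j + 2) (by omega), h2, Finset.mul_sum,
      even_odd_split (fun i => lam * (b (2 * (j + 1) - i) * δ i)) (j + 1)]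
    congr 1
    · refine Finset.sum_congr rfl fun k hk => ?_
      have hk' : k < j + 1 := Finset.mem_range.mp hk
      have he : 2 * (j + 1) - 2 * k = 2 * (j - k) + 2 := by omega
      rw [he]; ring
    · refine Finset.sum_congr rfl fun k hk => ?_
      have hk' : k < j + 1 := Finset.mem_range.mp hk
      have he : 2 * (j + 1) - (2 * k + 1) = 2 * (j - k) + 1 := by omega
      rw [he]; ring
  -- odd recursion
  have hodd : ∀ j : ℕ, δ (2 * j + 1)
      = (∑ k ∈ range (j + 1), δ (2 * k) * (lam * b (2 * (j - k) + 1)))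
        + ∑ k ∈ range j, δ (2 * k + 1) * (lam * b (2 * (j - 1 - k) + 2)) := by
    intro j
    rw [hδ (2 * j + 1) (by omega), Finset.mul_sum,
      even_odd_split' (fun i => lam * (b (2 * j + 1 - i) * δ i)) j]
    congr 1
    · refine Finset.sum_congr rfl fun k hk => ?_
      have hk' : k < j + 1 := Finset.mem_range.mp hk
      have he : 2 * j + 1 - 2 * k = 2 * (j - k) + 1 := by omega
      rw [he]; ring
    · refine Finset.sum_congr rfl fun k hk => ?_
      have hk' : k < j := Finset.mem_range.mp hk
      have he : 2 * j + 1 - (2 * k + 1) = 2 * (j - 1 - k) + 2 := by omega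
      rw [he]; ring
  -- E = 1 + S₁ E + S₀ O
  have hEeq : E = 1 + E * S₁ + O * S₀ := by
    have hEsum : HasSum (fun j : ℕ => δ (2 * (j + 1))) (E * S₁ + O * S₀) := by
      have hfun : (fun j : ℕ => δ (2 * (j + 1)))
        = fun j : ℕ =>
            (∑ k ∈ range (j + 1), δ (2 * k) * (lam * b (2 * (j - k) + 2)))
            + ∑ k ∈ range (j + 1), δ (2 * k + 1) * (lam * b (2 * (j - k) + 1)) := by
        funext j
        rw [show 2 * (j + 1) = 2 * j + 2 by ring]
        exact heven j
      rw [hfun]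
      exact hA.add hB
    have hse2 : Summable (fun j : ℕ => δ (2 * (j + 1))) := hEsum.summable
    have hhead := Summable.tsum_eq_zero_add (f := fun j : ℕ => δ (2 * j)) hse
    rw [← hE] at hhead
    have h20 : δ (2 * 0) = 1 := by norm_num [hδ0]
    have hval : (∑' j : ℕ, δ (2 * (j + 1))) = E * S₁ + O * S₀ := hEsum.tsum_eq
    linarith [hhead, hval, h20]
  -- O = S₀ E + S₁ O
  have hOeq : O = E * S₀ + O * S₁ := by
    have hCsum : HasSum
        (fun j : ℕ => ∑ k ∈ range j, δ (2 * k + 1) * (lam * b (2 * (j - 1 - k) + 2)))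
        (O * S₁) := by
      have h0 : HasSum
          (fun m : ℕ => ∑ k ∈ range (m + 1), δ (2 * k + 1)
            * (lam * b (2 * (m + 1 - 1 - k) + 2)))
          (O * S₁) := by
        have hfun : (fun m : ℕ => ∑ k ∈ range (m + 1), δ (2 * k + 1)
              * (lam * b (2 * (m + 1 - 1 - k) + 2)))
            = fun m : ℕ => ∑ k ∈ range (m + 1), δ (2 * k + 1)
              * (lam * b (2 * (m - k) + 2)) := by
          funext m
          refine Finset.sum_congr rfl fun k hk => ?_
          have hk' : k < m + 1 := Finset.mem_range.mp hk
          have he : m + 1 - 1 - k = m - k := by omega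
          rw [he]
        rw [hfun]
        exact hB'
      have h := h0.zero_add
        (f := fun j : ℕ => ∑ k ∈ range j, δ (2 * k + 1) * (lam * b (2 * (j - 1 - k) + 2)))
      simpa using h
    have hOsum : HasSum (fun j : ℕ => δ (2 * j + 1)) (E * S₀ + O * S₁) := by
      have hfun : (fun j : ℕ => δ (2 * j + 1))
        = fun j : ℕ =>
            (∑ k ∈ range (j + 1), δ (2 * k) * (lam * b (2 * (j - k) + 1)))
            + ∑ k ∈ range j, δ (2 * k + 1) * (lam * b (2 * (j - 1 - k) + 2)) := by
        funext j; exact hodd j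
      rw [hfun]
      exact hA'.add hCsum
    rw [hO]
    exact hOsum.tsum_eq
  -- final algebra
  have hD : 0 < (1 - S₁) ^ 2 - S₀ ^ 2 := by nlinarith
  refine ⟨hpos, hsummable, ?_, ?_⟩
  · rw [eq_div_iff hD.ne']
    linear_combination (1 - S₁) * hEeq + S₀ * hOeq
  · rw [eq_div_iff hD.ne']
    linear_combination S₀ * hEeq + (1 - S₁) * hOeq
end

section
/- Let λ₁ > 0, let b : {1,2,…} → [0,∞), and let δ : ℕ → ℝ satisfy δ(0) = 1 and δ(n) = λ₁ Σ_{j=0}^{n−1} b(n−j) δ(j) for n ≥ 1. Let φ be in the class W(1) and be asymptotic to a nonincreasing sequence, and suppose there are a₀ > 0 and a₁ > 0 such that lim_{n→∞} λ₁ b(2n+i+1)/φ(2n) = a_i for i ∈ {0,1}. Define S_i := λ₁ Σ_{j=0}^∞ b(2j+i+1) and assume S₀ + S₁ < 1. Let d₀ := lim_{n→∞} δ(2n)/φ(2n) and d₁ := lim_{n→∞} δ(2n+1)/φ(2n) (which exist), and define χ_δ(u) := Σ_{j=0}^∞ δ(j) δ(j+u) for u ≥ 0. Then lim_{u→∞}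 χ_δ(2u)/φ(2u) = d₀ Σ_{j=0}^∞ δ(2j) + d₁ Σ_{j=0}^∞ δ(2j+1) and lim_{u→∞} χ_δ(2u+1)/φ(2u) = d₁ Σ_{j=0}^∞ δ(2j) + d₀ Σ_{j=0}^∞ δ(2j+1). -/
open Filter Topology

set_option maxHeartbeats 1000000 in
/-- Example 4.3 of the paper: asymptotics of `χ_δ(u) = Σ_j δ(j) δ(j+u)` along even
and odd subsequences relative to the weight `φ`. -/
theorem stmt14 (lam : ℝ) (hlam : 0 < lam)
    (b : ℕ → ℝ) (hb : ∀ j, 1 ≤ j → 0 ≤ b j)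
    (δ : ℕ → ℝ) (hδ0 : δ 0 = 1)
    (hδ : ∀ n, 1 ≤ n → δ n = lam * ∑ j ∈ Finset.range n, b (n - j) * δ j)
    (φ : ℕ → ℝ) (hφ : ClassW 1 φ)
    (ψ : ℕ → ℝ) (hψ : ∀ n, ψ (n + 1) ≤ ψ n)
    (hφψ : Tendsto (fun n => φ n / ψ n) atTop (𝓝 1))
    (a₀ a₁ : ℝ) (ha₀ : 0 < a₀) (ha₁ : 0 < a₁)
    (hlim0 : Tendsto (fun n => lam * b (2 * n + 1) / φ (2 * n)) atTop (𝓝 a₀))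
    (hlim1 : Tendsto (fun n => lam * b (2 * n + 2) / φ (2 * n)) atTop (𝓝 a₁))
    (hb0 : Summable (fun j : ℕ => b (2 * j + 1)))
    (hb1 : Summable (fun j : ℕ => b (2 * j + 2)))
    (S₀ S₁ : ℝ)
    (hS₀ : S₀ = lam * ∑' j : ℕ, b (2 * j + 1))
    (hS₁ : S₁ = lam * ∑' j : ℕ, b (2 * j + 2))
    (hS : S₀ + S₁ < 1)
    (d₀ d₁ : ℝ)
    (hd₀ : Tendsto (fun n => δ (2 * n) / φ (2 * n)) atTop (𝓝 d₀))
    (hd₁ : Tendsto (fun n => δ (2 * n + 1) / φ (2 * n)) atTop (𝓝 d₁)) :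
    Tendsto (fun u => (∑' j : ℕ, δ j * δ (j + 2 * u)) / φ (2 * u)) atTop
      (𝓝 (d₀ * ∑' j : ℕ, δ (2 * j) + d₁ * ∑' j : ℕ, δ (2 * j + 1))) ∧
    Tendsto (fun u => (∑' j : ℕ, δ j * δ (j + (2 * u + 1))) / φ (2 * u)) atTop
      (𝓝 (d₁ * ∑' j : ℕ, δ (2 * j) + d₀ * ∑' j : ℕ, δ (2 * j + 1))) := by
  
  -- positivity of δ
  have hφpos : ∀ n, 0 < φ n := hφ.1
  have hδnn : ∀ n, 0 ≤ δ n := by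
    intro n
    induction n using Nat.strong_induction_on with
    | _ n ih =>
      rcases Nat.eq_zero_or_pos n with h | h
      · simp [h, hδ0]
      · rw [hδ n h]
        refine mul_nonneg hlam.le (Finset.sum_nonneg fun j hj => ?_)
        rw [Finset.mem_range] at hj
        exact mul_nonneg (hb _ (by omega)) (ih j hj)
  have hφsum : Summable φ := by simpa using hφ.2.2.1
  -- ratio lemmas
  have hratio : Tendsto (fun n => φ (n + 1) / φ n) atTop (𝓝 1) := by
    have h0 : Tendsto (fun n => φ (n - 1) / φ n) atTop (𝓝 1) := by
      simpa using hφ.2.1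
    have h1 : Tendsto (fun n => φ n / φ (n + 1)) atTop (𝓝 1) :=
      (h0.comp (tendsto_add_atTop_nat 1)).congr (fun n => by simp)
    have h2 := h1.inv₀ one_ne_zero
    simpa [inv_div] using h2
  have hrk : ∀ k : ℕ, Tendsto (fun n => φ (n + k) / φ n) atTop (𝓝 1) := by
    intro k
    induction k with
    | zero =>
      exact tendsto_const_nhds.congr fun n => by
        rw [Nat.add_zero, div_self (hφpos n).ne']
    | succ k ih =>
      have h := ((ih.comp (tendsto_add_atTop_nat 1)).mul hratio)
      rw [one_mul] at h
      refine h.congr fun n => ?_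
      simp only [Function.comp_apply]
      rw [div_mul_div_cancel₀ (hφpos (n + 1)).ne',
        show n + 1 + k = n + (k + 1) from by omega]
  have h2u : Tendsto (fun u : ℕ => 2 * u) atTop atTop :=
    tendsto_atTop_atTop.mpr fun c => ⟨c, fun a ha => by omega⟩
  have hshift : ∀ k : ℕ, Tendsto (fun u => φ (2 * u + k) / φ (2 * u)) atTop (𝓝 1) :=
    fun k => (hrk k).comp h2u
  -- comparison of φ with the nonincreasing ψ
  have hψk : ∀ m k, ψ (m + k) ≤ ψ m := by
    intro m k
    induction k with
    | zero => exact le_rfl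
    | succ k ih => exact (hψ (m + k)).trans ih
  obtain ⟨N₁, hN₁⟩ : ∃ N₁, ∀ n, N₁ ≤ n → φ n ≤ 2 * ψ n ∧ ψ n ≤ 2 * φ n := by
    have h1 : ∀ᶠ n in atTop, (1 : ℝ) / 2 < φ n / ψ n :=
      hφψ.eventually_const_lt (by norm_num)
    have h2 : ∀ᶠ n in atTop, φ n / ψ n < 2 :=
      hφψ.eventually_lt_const (by norm_num)
    rcases eventually_atTop.mp (h1.and h2) with ⟨N, hN⟩
    refine ⟨N, fun n hn => ?_⟩
    obtain ⟨ha, hb'⟩ := hN n hn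
    have hψpos : 0 < ψ n := by
      by_contra hle
      push_neg at hle
      have := div_nonpos_of_nonneg_of_nonpos (hφpos n).le hle
      linarith
    constructor
    · have := (div_lt_iff₀ hψpos).mp hb'
      linarith
    · have := (lt_div_iff₀ hψpos).mp ha
      linarith
  have hφmono : ∀ m k, N₁ ≤ m → φ (m + k) ≤ 4 * φ m := by
    intro m k hm
    have h1 := (hN₁ (m + k) (by omega)).1
    have h2 := (hN₁ m hm).2
    have h3 := hψk m k
    linarith
  -- bounds for δ in terms of φ
  set C : ℝ := max |d₀| |d₁| + 1 with hC
  have hCpos : 0 < C := by positivity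
  obtain ⟨N₂, hN₂⟩ : ∃ N₂, ∀ n, N₂ ≤ n → δ (2 * n) ≤ C * φ (2 * n) := by
    have h := hd₀.eventually_lt_const
      (show d₀ < C by
        have : d₀ ≤ |d₀| := le_abs_self _
        have : |d₀| ≤ max |d₀| |d₁| := le_max_left _ _
        nlinarith [le_abs_self d₀, le_max_left |d₀| |d₁|])
    rcases eventually_atTop.mp h with ⟨N, hN⟩
    exact ⟨N, fun n hn => le_of_lt ((div_lt_iff₀ (hφpos _)).mp (hN n hn))⟩
  obtain ⟨N₃, hN₃⟩ : ∃ N₃, ∀ n, N₃ ≤ n → δ (2 * n + 1) ≤ C * φ (2 * n) := by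
    have h := hd₁.eventually_lt_const
      (show d₁ < C by nlinarith [le_abs_self d₁, le_max_right |d₀| |d₁|])
    rcases eventually_atTop.mp h with ⟨N, hN⟩
    exact ⟨N, fun n hn => le_of_lt ((div_lt_iff₀ (hφpos _)).mp (hN n hn))⟩
  -- summability of δ along even and odd indices
  have heven : Summable (fun k => δ (2 * k)) := by
    rw [← summable_nat_add_iff N₂]
    have hinj : Function.Injective (fun n : ℕ => 2 * (n + N₂)) := by
      intro a b h
      simp only at h
      omega
    refine Summable.of_nonneg_of_le (fun n => hδnn _) (fun n => ?_)
      ((hφsum.comp_injective hinj).mul_left C)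
    exact hN₂ (n + N₂) (by omega)
  have hodd : Summable (fun k => δ (2 * k + 1)) := by
    rw [← summable_nat_add_iff N₃]
    have hinj : Function.Injective (fun n : ℕ => 2 * (n + N₃)) := by
      intro a b h
      simp only at h
      omega
    refine Summable.of_nonneg_of_le (fun n => hδnn _) (fun n => ?_)
      ((hφsum.comp_injective hinj).mul_left C)
    exact hN₃ (n + N₃) (by omega)
  have hδsum : Summable δ := heven.even_add_odd hodd
  -- pointwise limits
  have hptw : ∀ m : ℕ, Tendsto (fun u => δ (m + 2 * u) / φ (2 * u)) atTop
      (𝓝 (if Even m then d₀ else d₁)) := by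
    intro m
    rcases Nat.even_or_odd m with ⟨k, hk⟩ | ⟨k, hk⟩
    · rw [if_pos ⟨k, hk⟩]
      have A : Tendsto (fun u => δ (2 * (u + k)) / φ (2 * (u + k))) atTop (𝓝 d₀) :=
        hd₀.comp (tendsto_add_atTop_nat k)
      have B : Tendsto (fun u => φ (2 * (u + k)) / φ (2 * u)) atTop (𝓝 1) :=
        (hshift (2 * k)).congr fun u => by ring_nf
      have := A.mul B
      rw [mul_one] at this
      refine this.congr fun u => ?_
      rw [div_mul_div_cancel₀ (hφpos (2 * (u + k))).ne',
        show 2 * (u + k) = m + 2 * u from by omega]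
    · rw [if_neg (by simp [hk, Nat.even_add_one, parity_simps])]
      have A : Tendsto (fun u => δ (2 * (u + k) + 1) / φ (2 * (u + k))) atTop (𝓝 d₁) :=
        hd₁.comp (tendsto_add_atTop_nat k)
      have B : Tendsto (fun u => φ (2 * (u + k)) / φ (2 * u)) atTop (𝓝 1) :=
        (hshift (2 * k)).congr fun u => by ring_nf
      have := A.mul B
      rw [mul_one] at this
      refine this.congr fun u => ?_
      rw [div_mul_div_cancel₀ (hφpos (2 * (u + k))).ne',
        show 2 * (u + k) + 1 = m + 2 * u from by omega]
  -- uniform domination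
  have hbd : ∀ᶠ u in atTop, ∀ m : ℕ, δ (m + 2 * u) ≤ 4 * C * φ (2 * u) := by
    rw [eventually_atTop]
    refine ⟨N₁ + N₂ + N₃ + 1, fun u hu m => ?_⟩
    rcases Nat.even_or_odd m with ⟨k, hk⟩ | ⟨k, hk⟩
    · have h1 : δ (m + 2 * u) = δ (2 * (u + k)) := by congr 1; omega
      have h2 : δ (2 * (u + k)) ≤ C * φ (2 * (u + k)) := hN₂ _ (by omega)
      have h3 : φ (2 * (u + k)) ≤ 4 * φ (2 * u) := by
        have := hφmono (2 * u) (2 * k) (by omega)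
        calc φ (2 * (u + k)) = φ (2 * u + 2 * k) := by congr 1; omega
          _ ≤ 4 * φ (2 * u) := this
      rw [h1]
      nlinarith
    · have h1 : δ (m + 2 * u) = δ (2 * (u + k) + 1) := by congr 1; omega
      have h2 : δ (2 * (u + k) + 1) ≤ C * φ (2 * (u + k)) := hN₃ _ (by omega)
      have h3 : φ (2 * (u + k)) ≤ 4 * φ (2 * u) := by
        have := hφmono (2 * u) (2 * k) (by omega)
        calc φ (2 * (u + k)) = φ (2 * u + 2 * k) := by congr 1; omega
          _ ≤ 4 * φ (2 * u) := this
      rw [h1]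
      nlinarith
  -- the key tsum identity
  have key : ∀ c₀ c₁ : ℝ, ∑' j, δ j * (if Even j then c₀ else c₁)
      = c₀ * (∑' j : ℕ, δ (2 * j)) + c₁ * (∑' j : ℕ, δ (2 * j + 1)) := by
    intro c₀ c₁
    have he : ∀ k : ℕ, δ (2 * k) * (if Even (2 * k) then c₀ else c₁) = δ (2 * k) * c₀ :=
      fun k => by rw [if_pos ⟨k, by omega⟩]
    have ho : ∀ k : ℕ, δ (2 * k + 1) * (if Even (2 * k + 1) then c₀ else c₁)
        = δ (2 * k + 1) * c₁ := fun k => by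
      rw [if_neg (by simp [Nat.even_add_one, parity_simps])]
    have hse : Summable fun k : ℕ => δ (2 * k) * (if Even (2 * k) then c₀ else c₁) :=
      (heven.mul_right c₀).congr fun k => (he k).symm
    have hso : Summable fun k : ℕ => δ (2 * k + 1) * (if Even (2 * k + 1) then c₀ else c₁) :=
      (hodd.mul_right c₁).congr fun k => (ho k).symm
    rw [← tsum_even_add_odd (f := fun j => δ j * (if Even j then c₀ else c₁)) hse hso, tsum_congr he, tsum_congr ho,
      tsum_mul_right, tsum_mul_right]
    ring
  -- bound summable
  have hbsum : Summable (fun j => δ j * (4 * C)) := hδsum.mul_right _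
  constructor
  · have main : Tendsto (fun u => ∑' j : ℕ, δ j * δ (j + 2 * u) / φ (2 * u)) atTop
        (𝓝 (∑' j : ℕ, δ j * (if Even j then d₀ else d₁))) := by
      refine tendsto_tsum_of_dominated_convergence hbsum (fun j => ?_) ?_
      · exact (((hptw j).const_mul (δ j)).congr fun u => (mul_div_assoc _ _ _).symm)
      · filter_upwards [hbd, eventually_atTop.mpr ⟨1, fun u hu => hu⟩] with u hu _
        intro j
        rw [Real.norm_eq_abs,
          abs_of_nonneg (div_nonneg (mul_nonneg (hδnn j) (hδnn _)) (hφpos _).le)]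
        rw [div_le_iff₀ (hφpos _)]
        calc δ j * δ (j + 2 * u) ≤ δ j * (4 * C * φ (2 * u)) :=
              mul_le_mul_of_nonneg_left (hu j) (hδnn j)
          _ = δ j * (4 * C) * φ (2 * u) := by ring
    rw [key d₀ d₁] at main
    refine main.congr fun u => ?_
    exact tsum_div_const
  · have main : Tendsto (fun u => ∑' j : ℕ, δ j * δ (j + (2 * u + 1)) / φ (2 * u)) atTop
        (𝓝 (∑' j : ℕ, δ j * (if Even (j + 1) then d₀ else d₁))) := by
      refine tendsto_tsum_of_dominated_convergence hbsum (fun j => ?_) ?_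
      · refine (((hptw (j + 1)).const_mul (δ j)).congr fun u => ?_)
        rw [← mul_div_assoc, show j + 1 + 2 * u = j + (2 * u + 1) from by omega]
      · filter_upwards [hbd] with u hu
        intro j
        rw [Real.norm_eq_abs,
          abs_of_nonneg (div_nonneg (mul_nonneg (hδnn j) (hδnn _)) (hφpos _).le)]
        rw [div_le_iff₀ (hφpos _)]
        have h1 : δ (j + (2 * u + 1)) ≤ 4 * C * φ (2 * u) := by
          have := hu (j + 1)
          calc δ (j + (2 * u + 1)) = δ (j + 1 + 2 * u) := by congr 1; omega
            _ ≤ 4 * C * φ (2 * u) := this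
        calc δ j * δ (j + (2 * u + 1)) ≤ δ j * (4 * C * φ (2 * u)) :=
              mul_le_mul_of_nonneg_left h1 (hδnn j)
          _ = δ j * (4 * C) * φ (2 * u) := by ring
    have hswap : (∑' j : ℕ, δ j * (if Even (j + 1) then d₀ else d₁))
        = ∑' j : ℕ, δ j * (if Even j then d₁ else d₀) := by
      refine tsum_congr fun j => ?_
      by_cases h : Even j
      · simp [h, Nat.even_add_one]
      · simp [h, Nat.even_add_one]
    rw [hswap, key d₁ d₀] at main
    refine main.congr fun u => ?_
    exact tsum_div_const
end
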